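/- arXiv:2306.00562 — 7 statements merged into one kernel-verified Lean document; each statement's English description precedes it below -/
import Mathlib

section
/- For every real μ > 0 and all α, β ∈ ℝ, set ω = √(1 + μ²(α² + β²)), α̃ = −μ²β/ω and β̃ = μ²α/ω. Then: (i) α̃² + β̃² < μ²; (ii) with ω̃ = √(1 − (α̃² + β̃²)/μ²) one has ω·ω̃ = 1; (iii) the inverse twin relations α = β̃/(μ²ω̃) and β = −α̃/(μ²ω̃) hold; and (iv) the angle functions ν = μ/ω and ν̃ = −1/(μω̃) satisfy ν̃ = −1/ν. -/
/-- Pointwise twin relations of the conformal duality: spacelike condition, `ω·ω̃ = 1`,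
the inverse twin relations, and the relation `ν̃ = -1/ν` between the angle functions. -/
theorem twin_relations (μ α β : ℝ) (hμ : 0 < μ)
    (ω αT βT ωT ν νT : ℝ)
    (hω : ω = Real.sqrt (1 + μ ^ 2 * (α ^ 2 + β ^ 2)))
    (hαT : αT = -(μ ^ 2 * β) / ω)
    (hβT : βT = μ ^ 2 * α / ω)
    (hωT : ωT = Real.sqrt (1 - (αT ^ 2 + βT ^ 2) / μ ^ 2))
    (hν : ν = μ / ω)
    (hνT : νT = -(1 / (μ * ωT))) :
    αT ^ 2 + βT ^ 2 < μ ^ 2 ∧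
    ω * ωT = 1 ∧
    α = βT / (μ ^ 2 * ωT) ∧
    β = -αT / (μ ^ 2 * ωT) ∧
    νT = -(1 / ν) := by
  have hs : (0:ℝ) ≤ μ ^ 2 * (α ^ 2 + β ^ 2) := by positivity
  have hω1 : (1:ℝ) ≤ ω := by
    rw [hω]
    have := Real.one_le_sqrt (x := 1 + μ ^ 2 * (α ^ 2 + β ^ 2))
    nlinarith [Real.sq_sqrt (by linarith : (0:ℝ) ≤ 1 + μ ^ 2 * (α ^ 2 + β ^ 2)),
      Real.sqrt_nonneg (1 + μ ^ 2 * (α ^ 2 + β ^ 2))]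
  have hωpos : (0:ℝ) < ω := by linarith
  have hωsq : ω ^ 2 = 1 + μ ^ 2 * (α ^ 2 + β ^ 2) := by
    rw [hω, Real.sq_sqrt (by linarith)]
  have hsum : αT ^ 2 + βT ^ 2 = μ ^ 4 * (α ^ 2 + β ^ 2) / ω ^ 2 := by
    rw [hαT, hβT]; field_simp; ring
  have hμ2 : (0:ℝ) < μ ^ 2 := by positivity
  have h1 : αT ^ 2 + βT ^ 2 < μ ^ 2 := by
    rw [hsum, div_lt_iff₀ (by positivity)]
    nlinarith
  have hkey : 1 - (αT ^ 2 + βT ^ 2) / μ ^ 2 = (1 / ω) ^ 2 := by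
    rw [hsum, hωsq]
    have h0 : (0:ℝ) < 1 + μ ^ 2 * (α ^ 2 + β ^ 2) := by linarith
    field_simp
    linear_combination hωsq
  have hωT' : ωT = 1 / ω := by
    rw [hωT, hkey, Real.sqrt_sq (by positivity)]
  have hωTpos : (0:ℝ) < ωT := by rw [hωT']; positivity
  refine ⟨h1, ?_, ?_, ?_, ?_⟩
  · rw [hωT']; field_simp
  · rw [hβT, hωT']; field_simp
  · rw [hαT, hωT']; field_simp
  · rw [hνT, hν, hωT']; field_simp
end

section
/- Let μ, λ₁, λ₂ > 0 and α, β ∈ ℝ, and set ω = √(1 + μ²(α² + β²)), α̃ = −μ²β/ω, β̃ = μ²α/ω. Then the coefficients of the first fundamental forms induced on the base by the dual graphs satisfy: λ₁²(1 − α̃²/μ²) = λ₁²(1 + μ²α²)/ω², −λ₁λ₂·α̃β̃/μ² = λ₁λ₂μ²αβ/ω², and λ₂²(1 − β̃²/μ²) = λ₂²(1 + μ²β²)/ω². Consequently, the metric induced by the Lorentzian dual graph equals ω⁻² times the metric induced by the Riemannian graph, i.e. the duality diffeomorphism is conformal with conformal factor ω⁻² = μ⁻²ν², where ν = μ/ω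 is the angle function of the Riemannian graph. -/
/-- The coefficients of the first fundamental forms induced on the base by dual graphs:
the Lorentzian induced metric equals `ω⁻²` times the Riemannian induced metric, and
`ω⁻² = μ⁻²ν²` where `ν = μ/ω` is the angle function of the Riemannian graph. -/
theorem duality_conformal_factor (μ l₁ l₂ α β : ℝ)
    (hμ : 0 < μ) (hl₁ : 0 < l₁) (hl₂ : 0 < l₂)
    (ω αT βT ν : ℝ)
    (hω : ω = Real.sqrt (1 + μ ^ 2 * (α ^ 2 + β ^ 2)))
    (hαT : αT = -(μ ^ 2 * β) / ω)
    (hβT : βT = μ ^ 2 * α / ω)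
    (hν : ν = μ / ω) :
    l₁ ^ 2 * (1 - αT ^ 2 / μ ^ 2) = l₁ ^ 2 * (1 + μ ^ 2 * α ^ 2) / ω ^ 2 ∧
    -(l₁ * l₂ * (αT * βT) / μ ^ 2) = l₁ * l₂ * μ ^ 2 * α * β / ω ^ 2 ∧
    l₂ ^ 2 * (1 - βT ^ 2 / μ ^ 2) = l₂ ^ 2 * (1 + μ ^ 2 * β ^ 2) / ω ^ 2 ∧
    (ω ^ 2)⁻¹ = (μ ^ 2)⁻¹ * ν ^ 2 := by
  have hpos : (0:ℝ) < 1 + μ ^ 2 * (α ^ 2 + β ^ 2) := by positivity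
  have hω2 : ω ^ 2 = 1 + μ ^ 2 * (α ^ 2 + β ^ 2) := by
    rw [hω, Real.sq_sqrt hpos.le]
  have hωpos : 0 < ω := hω ▸ Real.sqrt_pos.mpr hpos
  have hωne : ω ≠ 0 := hωpos.ne'
  have hμne : μ ≠ 0 := hμ.ne'
  subst hαT hβT hν
  refine ⟨?_, ?_, ?_, ?_⟩
  · field_simp
    linear_combination hω2
  · field_simp
  · field_simp
    linear_combination hω2
  · field_simp
end

section
/- Let Ω ⊆ ℝ² be open and star-shaped with respect to the origin, let ε ∈ {+1, −1}, and let λ₁, λ₂, μ, τ : Ω → ℝ be smooth with λ₁, λ₂, μ > 0. Define the Calabi potential C(x,y) = 2∫₀¹ s·τ(sx,sy)·λ₁(sx,sy)·λ₂(sx,sy)/μ(sx,sy) ds, and set a = −ε y C/λ₁ and b = ε x C/λ₂. Then a and b are smooth on Ω and satisfy ∂ₓ(λ₂ b) − ∂_y(λ₁ a) = 2ετλ₁λ₂/μ on Ω. -/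
/-- Partial derivative in the `x` direction of a function on `ℝ × ℝ`. -/
noncomputable def pdx (f : ℝ × ℝ → ℝ) (p : ℝ × ℝ) : ℝ := fderiv ℝ f p (1, 0)

/-- Partial derivative in the `y` direction of a function on `ℝ × ℝ`. -/
noncomputable def pdy (f : ℝ × ℝ → ℝ) (p : ℝ × ℝ) : ℝ := fderiv ℝ f p (0, 1)

/-- The Calabi potential of the data `(λ₁, λ₂, μ, τ)` on a star-shaped domain. -/
noncomputable def calabiPotential (l₁ l₂ μ τ : ℝ × ℝ → ℝ) (p : ℝ × ℝ) : ℝ :=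
  2 * ∫ s in (0:ℝ)..1, s * τ (s • p) * l₁ (s • p) * l₂ (s • p) / μ (s • p)

set_option synthInstance.maxHeartbeats 1000000
open scoped ContDiff Topology Manifold
open MeasureTheory Set Metric

section param
variable {F : Type} [NormedAddCommGroup F] [NormedSpace ℝ F]

lemma my_param_hasFDerivAt (H : ℝ × (ℝ × ℝ) → F) (hH : ContDiff ℝ ∞ H) (x₀ : ℝ × ℝ) :
    HasFDerivAt (fun x => ∫ t in (0:ℝ)..1, H (t, x))
      (∫ t in (0:ℝ)..1, (fderiv ℝ H (t, x₀)).comp (ContinuousLinearMap.inr ℝ ℝ (ℝ × ℝ))) x₀ := by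
  have h1 : (1 : WithTop ℕ∞) ≤ ∞ := by exact_mod_cast le_top
  set G : ℝ × (ℝ × ℝ) → (ℝ × ℝ) →L[ℝ] F :=
    fun p => (fderiv ℝ H p).comp (ContinuousLinearMap.inr ℝ ℝ (ℝ × ℝ)) with hGdef
  have hGc : Continuous G :=
    ((hH.fderiv_right (m := ∞) le_rfl).continuous).clm_comp continuous_const
  have hdiff : ∀ (t : ℝ) (x : ℝ × ℝ), HasFDerivAt (fun y => H (t, y)) (G (t, x)) x := by
    intro t x
    have hd : HasFDerivAt H (fderiv ℝ H (t, x)) (t, x) :=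
      (hH.differentiable (by simp) (t, x)).hasFDerivAt
    have h2 : HasFDerivAt (fun y : ℝ × ℝ => ((t, y) : ℝ × (ℝ × ℝ)))
        (ContinuousLinearMap.inr ℝ ℝ (ℝ × ℝ)) x :=
      HasFDerivAt.prodMk (hasFDerivAt_const t x) (hasFDerivAt_id x)
    exact hd.comp x h2
  obtain ⟨C, hC⟩ : ∃ C, ∀ q ∈ (Icc (0:ℝ) 1) ×ˢ closedBall x₀ 1, ‖G q‖ ≤ C :=
    (isCompact_Icc.prod (isCompact_closedBall x₀ 1)).exists_bound_of_continuousOn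
      hGc.continuousOn
  exact intervalIntegral.hasFDerivAt_integral_of_dominated_of_fderiv_le (𝕜 := ℝ)
    (F := fun x t => H (t, x)) (F' := fun x t => G (t, x)) (bound := fun _ => C)
    (ball_mem_nhds x₀ one_pos)
    (Filter.Eventually.of_forall fun x =>
      ((hH.continuous.comp (by fun_prop)).aestronglyMeasurable))
    ((hH.continuous.comp (by fun_prop)).intervalIntegrable 0 1)
    ((hGc.comp (by fun_prop)).aestronglyMeasurable)
    (Filter.Eventually.of_forall fun t ht x hx =>
      hC (t, x) ⟨⟨le_of_lt (by simpa using ht.1), by simpa using ht.2⟩, ball_subset_closedBall hx⟩)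
    (intervalIntegrable_const)
    (Filter.Eventually.of_forall fun t _ x _ => hdiff t x)

end param

lemma my_param_contDiff (n : ℕ) :
    ∀ {F : Type} [NormedAddCommGroup F] [NormedSpace ℝ F]
    (H : ℝ × (ℝ × ℝ) → F), ContDiff ℝ ∞ H →
    ContDiff ℝ (n : ℕ) (fun x => ∫ t in (0:ℝ)..1, H (t, x)) := by
  induction n with
  | zero =>
    intro F _ _ H hH
    exact contDiff_zero.mpr (continuous_iff_continuousAt.mpr
      (fun x => (my_param_hasFDerivAt H hH x).differentiableAt.continuousAt))
  | succ n ih =>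
    intro F _ _ H hH
    have hG : ContDiff ℝ ∞ (fun p : ℝ × (ℝ × ℝ) =>
        (fderiv ℝ H p).comp (ContinuousLinearMap.inr ℝ ℝ (ℝ × ℝ))) :=
      (hH.fderiv_right (m := ∞) le_rfl).clm_comp contDiff_const
    have heq : (fderiv ℝ (fun x => ∫ t in (0:ℝ)..1, H (t, x))) =
        fun x => ∫ t in (0:ℝ)..1,
          (fderiv ℝ H (t, x)).comp (ContinuousLinearMap.inr ℝ ℝ (ℝ × ℝ)) :=
      funext fun x => (my_param_hasFDerivAt H hH x).fderiv
    have : ((n + 1 : ℕ) : WithTop ℕ∞) = (n : WithTop ℕ∞) + 1 := by push_cast; ring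
    rw [this]
    refine contDiff_succ_iff_fderiv.mpr
      ⟨fun x => (my_param_hasFDerivAt H hH x).differentiableAt, ?_, ?_⟩
    · intro h; exact absurd h (by simp)
    · rw [heq]; exact ih _ hG

lemma my_param_contDiff_top {F : Type} [NormedAddCommGroup F] [NormedSpace ℝ F]
    (H : ℝ × (ℝ × ℝ) → F) (hH : ContDiff ℝ ∞ H) :
    ContDiff ℝ ∞ (fun x => ∫ t in (0:ℝ)..1, H (t, x)) :=
  contDiff_infty.mpr fun n => my_param_contDiff n H hH

lemma my_smooth_extension {Ω : Set (ℝ × ℝ)} (hΩ : IsOpen Ω) {f : ℝ × ℝ → ℝ}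
    (hf : ContDiffOn ℝ ∞ f Ω) {K : Set (ℝ × ℝ)} (hK : IsCompact K) (hKΩ : K ⊆ Ω) :
    ∃ (g : ℝ × ℝ → ℝ) (U : Set (ℝ × ℝ)),
      ContDiff ℝ ∞ g ∧ IsOpen U ∧ K ⊆ U ∧ U ⊆ Ω ∧ EqOn g f U := by
  obtain ⟨K₁, hK₁c, hKK₁, hK₁Ω⟩ := exists_compact_between hK hΩ hKΩ
  obtain ⟨K₂, hK₂c, hK₁K₂, hK₂Ω⟩ := exists_compact_between hK₁c hΩ hK₁Ω
  obtain ⟨χ, hχ0, hχ1, _⟩ :=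
    exists_contMDiffMap_zero_one_of_isClosed (n := (⊤ : ℕ∞)) (𝓘(ℝ, ℝ × ℝ))
      (isOpen_interior.isClosed_compl) (hK₁c.isClosed)
      (disjoint_compl_left_iff.mpr hK₁K₂)
  have hχs : ContDiff ℝ ∞ (χ : ℝ × ℝ → ℝ) := χ.contMDiff.contDiff
  refine ⟨fun q => χ q * f q, interior K₁, ?_, isOpen_interior,
    hKK₁, interior_subset.trans hK₁Ω, ?_⟩
  · rw [contDiff_iff_contDiffAt]
    intro q
    by_cases hq : q ∈ Ω
    · exact (hχs.contDiffAt).mul (hf.contDiffAt (hΩ.mem_nhds hq))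
    · have hq2 : q ∈ (K₂ : Set (ℝ × ℝ))ᶜ := fun h => hq (hK₂Ω h)
      have : ∀ r ∈ (K₂ : Set (ℝ × ℝ))ᶜ, χ r * f r = 0 := by
        intro r hr
        have : χ r = 0 := hχ0 (fun h => hr (interior_subset h))
        simp [this]
      exact contDiffAt_const.congr_of_eventuallyEq
        (Filter.eventuallyEq_of_mem (hK₂c.isClosed.isOpen_compl.mem_nhds hq2)
          (fun r hr => this r hr))
  · intro q hq
    have : χ q = 1 := hχ1 (interior_subset hq)
    simp [this]

lemma my_local (Ω : Set (ℝ × ℝ)) (hΩ_open : IsOpen Ω)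
    (hstar : StarConvex ℝ (0 : ℝ × ℝ) Ω)
    (f : ℝ × ℝ → ℝ) (hf : ContDiffOn ℝ ∞ f Ω) (p : ℝ × ℝ) (hp : p ∈ Ω) :
    ∃ (Ψ : ℝ × ℝ → ℝ) (δ : ℝ), 0 < δ ∧ ContDiff ℝ ∞ Ψ ∧
      (∀ q ∈ ball p δ, (∫ s in (0:ℝ)..1, s * f (s • q)) = Ψ q) ∧
      2 * Ψ p + fderiv ℝ Ψ p p = f p := by
  set K : Set (ℝ × ℝ) := (fun s : ℝ => s • p) '' Icc 0 1 with hKdef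
  have hKc : IsCompact K := isCompact_Icc.image (continuous_id.smul continuous_const)
  have hKΩ : K ⊆ Ω := by
    rintro _ ⟨s, hs, rfl⟩
    have := hstar hp (a := 1 - s) (b := s) (by linarith [hs.2]) hs.1 (by ring)
    simpa using this
  obtain ⟨g, U, hg, hU, hKU, hUΩ, hgf⟩ := my_smooth_extension hΩ_open hf hKc hKΩ
  obtain ⟨δ, hδ, hth⟩ := hKc.exists_thickening_subset_open hU hKU
  have hseg : ∀ q ∈ ball p δ, ∀ s ∈ Icc (0:ℝ) 1, s • q ∈ U := by
    intro q hq s hs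
    apply hth
    rw [mem_thickening_iff]
    refine ⟨s • p, ⟨s, hs, rfl⟩, ?_⟩
    have h1 : dist (s • q) (s • p) = |s| * dist q p := by
      simp [dist_eq_norm, ← smul_sub, norm_smul, Real.norm_eq_abs]
    have h2 : |s| ≤ 1 := abs_le.mpr ⟨by linarith [hs.1], hs.2⟩
    have h3 : dist q p < δ := mem_ball.mp hq
    calc dist (s • q) (s • p) = |s| * dist q p := h1
      _ ≤ 1 * dist q p := by gcongr
      _ < δ := by simpa using h3
  set H : ℝ × (ℝ × ℝ) → ℝ := fun r => r.1 * g (r.1 • r.2) with hHdef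
  have hH : ContDiff ℝ ∞ H := contDiff_fst.mul (hg.comp (contDiff_fst.smul contDiff_snd))
  set Ψ : ℝ × ℝ → ℝ := fun x => ∫ t in (0:ℝ)..1, H (t, x) with hΨdef
  have hΨ : ContDiff ℝ ∞ Ψ := my_param_contDiff_top H hH
  have hDΨ := my_param_hasFDerivAt H hH p
  have hΨat : HasFDerivAt Ψ (fderiv ℝ Ψ p) p := hDΨ.fderiv ▸ hDΨ
  refine ⟨Ψ, δ, hδ, hΨ, ?_, ?_⟩
  · intro q hq
    apply intervalIntegral.integral_congr
    intro s hs
    rw [uIcc_of_le (by norm_num : (0:ℝ) ≤ 1)] at hs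
    show s * f (s • q) = s * g (s • q)
    rw [hgf (hseg q hq s hs)]
  · have hpU : p ∈ U := hKU ⟨1, by norm_num, one_smul ℝ p⟩
    set h : ℝ → ℝ := fun u => u * g (u • p) with hhdef
    have hhc : Continuous h :=
      continuous_id.mul (hg.continuous.comp (continuous_id.smul continuous_const))
    have hΦ : HasDerivAt (fun t => ∫ u in (0:ℝ)..t, h u) (h 1) 1 :=
      intervalIntegral.integral_hasDerivAt_right (hhc.intervalIntegrable 0 1)
        (hhc.stronglyMeasurableAtFilter _ _) hhc.continuousAt
    have heqn : (fun t : ℝ => t ^ 2 * Ψ (t • p)) =ᶠ[𝓝 (1:ℝ)]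
        (fun t => ∫ u in (0:ℝ)..t, h u) := by
      apply Filter.eventuallyEq_of_mem (isOpen_Ioi.mem_nhds (by norm_num : (1:ℝ) ∈ Ioi 0))
      intro t ht
      have ht0 : t ≠ 0 := ne_of_gt ht
      have e1 : Ψ (t • p) = ∫ s in (0:ℝ)..1, t⁻¹ * h (s * t) := by
        apply intervalIntegral.integral_congr
        intro s _
        show s * g (s • t • p) = t⁻¹ * (s * t * g ((s * t) • p))
        rw [smul_smul]
        field_simp
      have e2 : (∫ s in (0:ℝ)..1, t⁻¹ * h (s * t))
          = t⁻¹ * ∫ s in (0:ℝ)..1, h (s * t) := intervalIntegral.integral_const_mul _ _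
      have e3 : (∫ s in (0:ℝ)..1, h (s * t)) = t⁻¹ • ∫ u in (0:ℝ)..t, h u := by
        rw [intervalIntegral.integral_comp_mul_right h ht0]; norm_num
      show t ^ 2 * Ψ (t • p) = _
      rw [e1, e2, e3, smul_eq_mul]
      field_simp
    have hcomp : HasDerivAt (fun t : ℝ => Ψ (t • p)) (fderiv ℝ Ψ p p) 1 := by
      have hray : HasDerivAt (fun t : ℝ => t • p) p 1 := by
        simpa using (hasDerivAt_id (1:ℝ)).smul_const p
      have h' : HasFDerivAt Ψ (fderiv ℝ Ψ p) ((1:ℝ) • p) := by rw [one_smul]; exact hΨat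
      exact h'.comp_hasDerivAt 1 hray
    have hprod : HasDerivAt (fun t : ℝ => t ^ 2 * Ψ (t • p))
        (2 * Ψ p + fderiv ℝ Ψ p p) 1 := by
      have : HasDerivAt (fun t : ℝ => t ^ 2 * Ψ (t • p)) _ 1 := (hasDerivAt_pow 2 (1:ℝ)).mul hcomp
      convert this using 1
      simp
    have := hprod.unique (hΦ.congr_of_eventuallyEq heqn)
    rw [this]
    show (1:ℝ) * g ((1:ℝ) • p) = f p
    rw [one_smul, one_mul, hgf hpU]
section main
open Filter

/-- The Calabi potential construction produces smooth data `a`, `b` solving the bundle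
curvature equation `∂ₓ(λ₂b) − ∂_y(λ₁a) = 2ετλ₁λ₂/μ` on a star-shaped domain. -/
theorem calabi_potential_solves_bundle_curvature
    (Ω : Set (ℝ × ℝ)) (hΩ_open : IsOpen Ω) (h0 : (0 : ℝ × ℝ) ∈ Ω)
    (hstar : StarConvex ℝ (0 : ℝ × ℝ) Ω)
    (ε : ℝ) (hε : ε = 1 ∨ ε = -1)
    (l₁ l₂ μ τ : ℝ × ℝ → ℝ)
    (hl₁ : ContDiffOn ℝ (⊤ : ℕ∞) l₁ Ω) (hl₂ : ContDiffOn ℝ (⊤ : ℕ∞) l₂ Ω)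
    (hμ : ContDiffOn ℝ (⊤ : ℕ∞) μ Ω) (hτ : ContDiffOn ℝ (⊤ : ℕ∞) τ Ω)
    (hl₁pos : ∀ p ∈ Ω, 0 < l₁ p) (hl₂pos : ∀ p ∈ Ω, 0 < l₂ p)
    (hμpos : ∀ p ∈ Ω, 0 < μ p)
    (a b : ℝ × ℝ → ℝ)
    (haDef : ∀ p, a p = -ε * p.2 * calabiPotential l₁ l₂ μ τ p / l₁ p)
    (hbDef : ∀ p, b p = ε * p.1 * calabiPotential l₁ l₂ μ τ p / l₂ p) :
    ContDiffOn ℝ (⊤ : ℕ∞) a Ω ∧ ContDiffOn ℝ (⊤ : ℕ∞) b Ω ∧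
    ∀ p ∈ Ω,
      pdx (fun q => l₂ q * b q) p - pdy (fun q => l₁ q * a q) p
        = 2 * ε * τ p * l₁ p * l₂ p / μ p := by
  set f : ℝ × ℝ → ℝ := fun r => τ r * l₁ r * l₂ r / μ r with hfdef
  have hf : ContDiffOn ℝ ∞ f Ω :=
    ((hτ.mul hl₁).mul hl₂).div hμ (fun q hq => (hμpos q hq).ne')
  have hCloc : ∀ p ∈ Ω, ∃ (Ψ : ℝ × ℝ → ℝ) (δ : ℝ), 0 < δ ∧ ContDiff ℝ ∞ Ψ ∧
      (∀ q ∈ Metric.ball p δ, calabiPotential l₁ l₂ μ τ q = 2 * Ψ q) ∧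
      2 * Ψ p + fderiv ℝ Ψ p p = f p := by
    intro p hp
    obtain ⟨Ψ, δ, hδ, hΨ, hEq, hKey⟩ := my_local Ω hΩ_open hstar f hf p hp
    refine ⟨Ψ, δ, hδ, hΨ, ?_, hKey⟩
    intro q hq
    rw [calabiPotential, ← hEq q hq]
    congr 1
    apply intervalIntegral.integral_congr
    intro s _
    show s * τ (s • q) * l₁ (s • q) * l₂ (s • q) / μ (s • q) = s * f (s • q)
    rw [hfdef]
    ring
  have hC : ContDiffOn ℝ (⊤ : ℕ∞) (calabiPotential l₁ l₂ μ τ) Ω := by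
    intro p hp
    obtain ⟨Ψ, δ, hδ, hΨ, hEq, _⟩ := hCloc p hp
    exact (((contDiff_const.mul hΨ).contDiffAt).congr_of_eventuallyEq
      (Filter.eventuallyEq_of_mem (Metric.ball_mem_nhds p hδ) hEq)).contDiffWithinAt
  refine ⟨?_, ?_, ?_⟩
  · exact (((contDiffOn_const.mul contDiff_snd.contDiffOn).mul hC).div hl₁
      (fun q hq => (hl₁pos q hq).ne')).congr (fun q _ => haDef q)
  · exact (((contDiffOn_const.mul contDiff_fst.contDiffOn).mul hC).div hl₂
      (fun q hq => (hl₂pos q hq).ne')).congr (fun q _ => hbDef q)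
  · intro p hp
    obtain ⟨Ψ, δ, hδ, hΨ, hEq, hKey⟩ := hCloc p hp
    set DΨ := fderiv ℝ Ψ p with hDdef
    have hΨat : HasFDerivAt Ψ DΨ p :=
      ((hΨ.differentiable (by simp)) p).hasFDerivAt
    have hnb : Metric.ball p δ ∩ Ω ∈ 𝓝 p :=
      Filter.inter_mem (Metric.ball_mem_nhds p hδ) (hΩ_open.mem_nhds hp)
    have hb2 : (fun q => l₂ q * b q) =ᶠ[𝓝 p] (fun q => (2 * ε) * (q.1 * Ψ q)) := by
      apply Filter.eventuallyEq_of_mem hnb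
      rintro q ⟨hq1, hq2⟩
      have hne := (hl₂pos q hq2).ne'
      show l₂ q * b q = 2 * ε * (q.1 * Ψ q)
      rw [hbDef q, hEq q hq1]
      field_simp
    have ha2 : (fun q => l₁ q * a q) =ᶠ[𝓝 p] (fun q => (-(2 * ε)) * (q.2 * Ψ q)) := by
      apply Filter.eventuallyEq_of_mem hnb
      rintro q ⟨hq1, hq2⟩
      have hne := (hl₁pos q hq2).ne'
      show l₁ q * a q = -(2 * ε) * (q.2 * Ψ q)
      rw [haDef q, hEq q hq1]
      field_simp
    have hx : HasFDerivAt (fun q : ℝ × ℝ => (2 * ε) * (q.1 * Ψ q))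
        ((2 * ε) • (p.1 • DΨ + Ψ p • ContinuousLinearMap.fst ℝ ℝ ℝ)) p :=
      (hasFDerivAt_fst.mul hΨat).const_mul (2 * ε)
    have hy : HasFDerivAt (fun q : ℝ × ℝ => (-(2 * ε)) * (q.2 * Ψ q))
        ((-(2 * ε)) • (p.2 • DΨ + Ψ p • ContinuousLinearMap.snd ℝ ℝ ℝ)) p :=
      (hasFDerivAt_snd.mul hΨat).const_mul (-(2 * ε))
    have hpdx : pdx (fun q => l₂ q * b q) p
        = 2 * ε * (p.1 * DΨ (1, 0) + Ψ p) := by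
      rw [pdx, hb2.fderiv_eq, hx.fderiv]
      simp
      ring
    have hpdy : pdy (fun q => l₁ q * a q) p
        = -(2 * ε) * (p.2 * DΨ (0, 1) + Ψ p) := by
      rw [pdy, ha2.fderiv_eq, hy.fderiv]
      simp
      ring
    have hlin : DΨ p = p.1 * DΨ (1, 0) + p.2 * DΨ (0, 1) := by
      have hp' : (p : ℝ × ℝ) = p.1 • ((1 : ℝ), (0 : ℝ)) + p.2 • ((0 : ℝ), (1 : ℝ)) := by
        ext <;> simp
      conv_lhs => rw [hp']
      rw [map_add, DΨ.map_smul, DΨ.map_smul, smul_eq_mul, smul_eq_mul]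
    rw [hlin] at hKey
    rw [hpdx, hpdy]
    have hfp : f p = τ p * l₁ p * l₂ p / μ p := rfl
    rw [hfp] at hKey
    linear_combination (2 * ε) * hKey

end main
end

section
/- Let R ∈ (0, +∞], let Ω ⊆ ℝ² be the open disk of radius R centered at the origin, and let λ, μ, H : Ω → ℝ be smooth rotationally invariant functions (i.e. functions of x² + y² only) with λ > 0 and μ > 0. Then there exists a smooth function v : Ω → ℝ satisfying the spacelike condition μ²(vₓ² + v_y²) < λ² on Ω and the prescribed mean curvature equation ∂ₓ(μ²vₓ/ω̃) + ∂_y(μ²v_y/ω̃) = 2Hμλ² on Ω, where ω̃ = √(1 − μ²(vₓ² + v_y²)/λ²); that is, the Lorentzian warped product 𝕃(M,0,μ) over M = (Ω, λ²(dx² + dy²)) admits an entire spacelike graph with prescribed mean curvature H. -/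
set_option synthInstance.maxHeartbeats 1000000
set_option maxHeartbeats 1000000

open MeasureTheory intervalIntegral Metric Set

noncomputable def Aint {E : Type} [NormedAddCommGroup E] [NormedSpace ℝ E]
    (k : ℕ) (g : ℝ × ℝ → E) (p : ℝ × ℝ) : E :=
  ∫ t in (0:ℝ)..1, t ^ k • g (t • p)

section Machinery

variable {Ω : Set (ℝ × ℝ)} {E : Type} [NormedAddCommGroup E] [NormedSpace ℝ E]

theorem integrand_contOn (hstar : ∀ p ∈ Ω, ∀ t ∈ Set.Icc (0:ℝ) 1, t • p ∈ Ω)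
    {g : ℝ × ℝ → E} (hg : ContinuousOn g Ω) {p : ℝ × ℝ}
    (hp : p ∈ Ω) (k : ℕ) :
    ContinuousOn (fun t : ℝ => t ^ k • g (t • p)) (Set.Icc (0:ℝ) 1) := by
  apply ContinuousOn.smul (by fun_prop)
  exact hg.comp (by fun_prop) (fun t ht => hstar p hp t ht)

theorem hasFDerivAt_Aint (hΩo : IsOpen Ω)
    (hstar : ∀ p ∈ Ω, ∀ t ∈ Set.Icc (0:ℝ) 1, t • p ∈ Ω)
    {g : ℝ × ℝ → E} (hg : ContDiffOn ℝ (⊤ : ℕ∞) g Ω)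
    {p : ℝ × ℝ} (hp : p ∈ Ω) (k : ℕ) :
    HasFDerivAt (Aint k g) (∫ t in (0:ℝ)..1, t ^ (k+1) • fderiv ℝ g (t • p)) p := by
  -- choose ε with closedBall p ε ⊆ Ω
  obtain ⟨ε, hε, hball⟩ : ∃ ε > 0, closedBall p ε ⊆ Ω := by
    obtain ⟨ε, hε, h⟩ := Metric.isOpen_iff.1 hΩo p hp
    exact ⟨ε/2, by linarith, (closedBall_subset_ball (by linarith)).trans h⟩
  have hcb : ∀ x ∈ closedBall p ε, ∀ t ∈ Set.Icc (0:ℝ) 1, t • x ∈ Ω :=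
    fun x hx t ht => hstar x (hball hx) t ht
  -- continuity of fderiv g on Ω
  have hg1 : ∀ q ∈ Ω, HasFDerivAt g (fderiv ℝ g q) q := by
    intro q hq
    exact ((hg.contDiffAt (hΩo.mem_nhds hq)).differentiableAt
      (by simp)).hasFDerivAt
  have hDg : ContinuousOn (fderiv ℝ g) Ω :=
    hg.continuousOn_fderiv_of_isOpen hΩo (by exact_mod_cast le_top)
  -- compact set and bound
  set K : Set (ℝ × ℝ) := (fun z : ℝ × (ℝ × ℝ) => z.1 • z.2) '' (Set.Icc (0:ℝ) 1 ×ˢ closedBall p ε)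
    with hK
  have hKc : IsCompact K := (isCompact_Icc.prod (isCompact_closedBall p ε)).image (by fun_prop)
  have hKΩ : K ⊆ Ω := by
    rintro q ⟨⟨t, x⟩, ⟨ht, hx⟩, rfl⟩
    exact hcb x hx t ht
  obtain ⟨C, hC⟩ := hKc.exists_bound_of_continuousOn (hDg.mono hKΩ)
  have hmem : ∀ x ∈ closedBall p ε, ∀ t ∈ Set.Icc (0:ℝ) 1, t • x ∈ K :=
    fun x hx t ht => ⟨(t, x), ⟨ht, hx⟩, rfl⟩
  have key := intervalIntegral.hasFDerivAt_integral_of_dominated_of_fderiv_le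
    (F := fun x t => t ^ k • g (t • x))
    (F' := fun x t => t ^ (k+1) • fderiv ℝ g (t • x))
    (x₀ := p) (a := 0) (b := 1) (μ := volume) (bound := fun _ => |C|) (Metric.ball_mem_nhds p hε)
    ?_ ?_ ?_ ?_ ?_ ?_
  · exact key
  · -- measurability of F x near p
    filter_upwards [Metric.closedBall_mem_nhds_of_mem (show dist p p < ε by simpa using hε)]
      with x hx
    apply ContinuousOn.aestronglyMeasurable ?_ measurableSet_uIoc
    have : Set.uIoc (0:ℝ) 1 ⊆ Set.Icc 0 1 := by
      rw [Set.uIoc_of_le (by norm_num)]; exact Set.Ioc_subset_Icc_self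
    refine ContinuousOn.mono ?_ this
    exact integrand_contOn (fun q hq => hstar q hq) hg.continuousOn (hball hx) k
  · apply ContinuousOn.intervalIntegrable
    rw [Set.uIcc_of_le (by norm_num : (0:ℝ) ≤ 1)]
    exact integrand_contOn (fun q hq => hstar q hq) hg.continuousOn hp k
  · apply ContinuousOn.aestronglyMeasurable ?_ measurableSet_uIoc
    have hsub : Set.uIoc (0:ℝ) 1 ⊆ Set.Icc 0 1 := by
      rw [Set.uIoc_of_le (by norm_num)]; exact Set.Ioc_subset_Icc_self
    refine ContinuousOn.mono ?_ hsub
    exact ContinuousOn.smul (f := fun t : ℝ => t ^ (k+1)) (g := fun t => fderiv ℝ g (t • p)) (by fun_prop)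
      (hDg.comp (by fun_prop) (fun t ht => hstar p hp t ht))
  · -- bound
    refine Filter.Eventually.of_forall (fun t ht x hx => ?_)
    have ht' : t ∈ Set.Icc (0:ℝ) 1 := by
      rw [Set.uIoc_of_le (by norm_num)] at ht; exact Set.Ioc_subset_Icc_self ht
    have hxb : x ∈ closedBall p ε := ball_subset_closedBall hx
    have h1 : ‖fderiv ℝ g (t • x)‖ ≤ C := hC _ (hmem x hxb t ht')
    have h2 : |t| ≤ 1 := abs_le.2 ⟨by linarith [ht'.1], ht'.2⟩
    calc ‖t ^ (k+1) • fderiv ℝ g (t • x)‖ = |t| ^ (k+1) * ‖fderiv ℝ g (t • x)‖ := by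
          rw [norm_smul (t ^ (k+1)) (fderiv ℝ g (t • x)), norm_pow, Real.norm_eq_abs]
      _ ≤ 1 * |C| := by
          apply mul_le_mul (pow_le_one₀ (abs_nonneg t) h2)
            (h1.trans (le_abs_self C)) (norm_nonneg _) zero_le_one
      _ = |C| := one_mul _
  · exact intervalIntegrable_const
  · -- differentiability in x
    refine Filter.Eventually.of_forall (fun t ht x hx => ?_)
    have ht' : t ∈ Set.Icc (0:ℝ) 1 := by
      rw [Set.uIoc_of_le (by norm_num)] at ht; exact Set.Ioc_subset_Icc_self ht
    have htx : t • x ∈ Ω := hcb x (ball_subset_closedBall hx) t ht'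
    have hlin : HasFDerivAt (fun x : ℝ × ℝ => t • x)
        (t • ContinuousLinearMap.id ℝ (ℝ × ℝ)) x :=
      by exact (t • ContinuousLinearMap.id ℝ (ℝ × ℝ)).hasFDerivAt
    have hcomp := ((hg1 _ htx).comp x hlin).const_smul (t ^ k)
    have heq : (t ^ k • (fderiv ℝ g (t • x)).comp (t • ContinuousLinearMap.id ℝ (ℝ × ℝ)))
        = t ^ (k+1) • fderiv ℝ g (t • x) := by
      apply ContinuousLinearMap.ext
      intro e
      simp only [ContinuousLinearMap.smul_apply, ContinuousLinearMap.coe_comp',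
        Function.comp_apply, ContinuousLinearMap.id_apply,
        ContinuousLinearMap.map_smul]
      rw [smul_smul, pow_succ]
    show HasFDerivAt (fun x => t ^ k • g (t • x)) (t ^ (k+1) • fderiv ℝ g (t • x)) x
    rw [← heq]
    exact hcomp
end Machinery

section M2
variable {Ω : Set (ℝ × ℝ)}

theorem contDiffOn_Aint (hΩo : IsOpen Ω)
    (hstar : ∀ p ∈ Ω, ∀ t ∈ Set.Icc (0:ℝ) 1, t • p ∈ Ω) :
    ∀ (n : ℕ) {E : Type} [NormedAddCommGroup E] [NormedSpace ℝ E] (k : ℕ)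
      (g : ℝ × ℝ → E), ContDiffOn ℝ (⊤ : ℕ∞) g Ω →
      ContDiffOn ℝ (n : ℕ∞) (Aint k g) Ω := by
  intro n
  induction n with
  | zero =>
    intro E _ _ k g hg
    rw [show (((0:ℕ) : ℕ∞) : WithTop ℕ∞) = 0 by norm_cast, contDiffOn_zero]
    intro p hp
    exact ((hasFDerivAt_Aint hΩo hstar hg hp k).differentiableAt.continuousAt).continuousWithinAt
  | succ n ih =>
    intro E _ _ k g hg
    have hcast : (((n+1:ℕ) : ℕ∞) : WithTop ℕ∞) = ((n : ℕ∞) : WithTop ℕ∞) + 1 := by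
      norm_cast
    rw [hcast, contDiffOn_succ_iff_fderiv_of_isOpen hΩo]
    have hg' : ContDiffOn ℝ (⊤ : ℕ∞) (fun q => fderiv ℝ g q) Ω :=
      hg.fderiv_of_isOpen hΩo (by simp)
    refine ⟨fun p hp => ((hasFDerivAt_Aint hΩo hstar hg hp k).differentiableAt).differentiableWithinAt,
      fun h => absurd h (by simp), ?_⟩
    refine (ih k.succ (fun q => fderiv ℝ g q) hg').congr (fun p hp => ?_)
    exact (hasFDerivAt_Aint hΩo hstar hg hp k).fderiv

theorem contDiffOn_top_Aint (hΩo : IsOpen Ω)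
    (hstar : ∀ p ∈ Ω, ∀ t ∈ Set.Icc (0:ℝ) 1, t • p ∈ Ω)
    {E : Type} [NormedAddCommGroup E] [NormedSpace ℝ E] (k : ℕ)
    {g : ℝ × ℝ → E} (hg : ContDiffOn ℝ (⊤ : ℕ∞) g Ω) :
    ContDiffOn ℝ (⊤ : ℕ∞) (Aint k g) Ω := by
  exact contDiffOn_infty.2 fun n => contDiffOn_Aint hΩo hstar n k g hg
end M2

section M3
variable {Ω : Set (ℝ × ℝ)}

theorem integrand_contOn' (hstar : ∀ p ∈ Ω, ∀ t ∈ Set.Icc (0:ℝ) 1, t • p ∈ Ω)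
    {g : ℝ × ℝ → ℝ} (hg : ContinuousOn g Ω) {p : ℝ × ℝ} (hp : p ∈ Ω) :
    ContinuousOn (fun t : ℝ => t * g (t • p)) (Set.Icc (0:ℝ) 1) := by
  have := integrand_contOn hstar hg hp 1
  simpa [smul_eq_mul] using this

theorem Aint_one_eq {g : ℝ × ℝ → ℝ} (p : ℝ × ℝ) :
    Aint 1 g p = ∫ t in (0:ℝ)..1, t * g (t • p) := by
  simp [Aint, smul_eq_mul]

theorem fderiv_Aint_apply_self (hΩo : IsOpen Ω)
    (hstar : ∀ p ∈ Ω, ∀ t ∈ Set.Icc (0:ℝ) 1, t • p ∈ Ω)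
    {g : ℝ × ℝ → ℝ} (hg : ContDiffOn ℝ (⊤ : ℕ∞) g Ω) {p : ℝ × ℝ} (hp : p ∈ Ω) :
    fderiv ℝ (Aint 1 g) p p = g p - 2 * Aint 1 g p := by
  have hg1 : ∀ q ∈ Ω, HasFDerivAt g (fderiv ℝ g q) q := fun q hq =>
    ((hg.contDiffAt (hΩo.mem_nhds hq)).differentiableAt
      (by simp)).hasFDerivAt
  have hDg : ContinuousOn (fderiv ℝ g) Ω :=
    hg.continuousOn_fderiv_of_isOpen hΩo (by exact_mod_cast le_top)
  have hIcc : Set.uIcc (0:ℝ) 1 = Set.Icc 0 1 := Set.uIcc_of_le (by norm_num)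
  -- continuity of the two integrands
  have hc1 : ContinuousOn (fun t : ℝ => t * g (t • p)) (Set.Icc (0:ℝ) 1) :=
    integrand_contOn' hstar hg.continuousOn hp
  have hsmul : ContinuousOn (fun t : ℝ => t • p) (Set.Icc (0:ℝ) 1) := by fun_prop
  have hc2 : ContinuousOn (fun t : ℝ => t ^ 2 * (fderiv ℝ g (t • p)) p) (Set.Icc (0:ℝ) 1) := by
    apply ContinuousOn.mul (by fun_prop)
    exact ContinuousOn.clm_apply (hDg.comp hsmul (fun t ht => hstar p hp t ht)) continuousOn_const
  have hcop : ContinuousOn (fun t : ℝ => t ^ 2 • fderiv ℝ g (t • p)) (Set.Icc (0:ℝ) 1) := by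
    exact ContinuousOn.smul (f := fun t : ℝ => t ^ 2) (g := fun t => fderiv ℝ g (t • p)) (by fun_prop)
      (hDg.comp hsmul (fun t ht => hstar p hp t ht))
  have hintop : IntervalIntegrable (fun t : ℝ => t ^ 2 • fderiv ℝ g (t • p))
      MeasureTheory.volume 0 1 := (hIcc ▸ hcop).intervalIntegrable
  have hint1 : IntervalIntegrable (fun t : ℝ => t * g (t • p)) MeasureTheory.volume 0 1 :=
    (hIcc ▸ hc1).intervalIntegrable
  have hint2 : IntervalIntegrable (fun t : ℝ => t ^ 2 * (fderiv ℝ g (t • p)) p)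
      MeasureTheory.volume 0 1 := (hIcc ▸ hc2).intervalIntegrable
  -- express the applied derivative as a scalar integral
  rw [(hasFDerivAt_Aint hΩo hstar hg hp 1).fderiv]
  rw [ContinuousLinearMap.intervalIntegral_apply hintop p]
  -- FTC for t ↦ t^2 * g (t • p)
  have hftc : ∀ t ∈ Set.uIcc (0:ℝ) 1, HasDerivAt (fun t : ℝ => t ^ 2 * g (t • p))
      (2 * t * g (t • p) + t ^ 2 * (fderiv ℝ g (t • p)) p) t := by
    intro t ht
    rw [hIcc] at ht
    have htp : t • p ∈ Ω := hstar p hp t ht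
    have hsp : HasDerivAt (fun t : ℝ => t • p) p t := by
      simpa using (hasDerivAt_id t).smul_const p
    have hgp : HasDerivAt (fun t : ℝ => g (t • p)) ((fderiv ℝ g (t • p)) p) t :=
      (hg1 _ htp).comp_hasDerivAt t hsp
    have := (hasDerivAt_pow 2 t).mul hgp
    exact this.congr_deriv (by push_cast; ring)
  have hkey := intervalIntegral.integral_eq_sub_of_hasDerivAt hftc
    (by
      apply IntervalIntegrable.add _ hint2
      have : IntervalIntegrable (fun t : ℝ => t * g (t • p)) MeasureTheory.volume 0 1 := hint1
      simpa [mul_assoc] using this.const_mul 2)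
  simp only [one_smul, zero_smul, one_pow, one_mul] at hkey
  -- hkey : ∫ (2 t g + t² Dg p) = g p - 0
  rw [intervalIntegral.integral_add (by simpa [mul_assoc] using hint1.const_mul 2) hint2] at hkey
  have h2int : (∫ t in (0:ℝ)..1, 2 * t * g (t • p)) = 2 * Aint 1 g p := by
    rw [Aint_one_eq]
    rw [← intervalIntegral.integral_const_mul]
    congr 1; funext t; ring
  have happ : (∫ t in (0:ℝ)..1, (t ^ 2 • fderiv ℝ g (t • p)) p)
      = ∫ t in (0:ℝ)..1, t ^ 2 * (fderiv ℝ g (t • p)) p := by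
    congr 1
  rw [happ]
  rw [h2int] at hkey
  linarith [hkey]
end M3

section M4
variable {Ω : Set (ℝ × ℝ)}

theorem fderiv_tangent_zero
    (hmem : ∀ p ∈ Ω, ∀ q : ℝ × ℝ, q.1 ^ 2 + q.2 ^ 2 = p.1 ^ 2 + p.2 ^ 2 → q ∈ Ω)
    {g : ℝ × ℝ → ℝ}
    (hrot : ∀ p ∈ Ω, ∀ q ∈ Ω, p.1 ^ 2 + p.2 ^ 2 = q.1 ^ 2 + q.2 ^ 2 → g p = g q)
    {p : ℝ × ℝ} (hp : p ∈ Ω) (hd : DifferentiableAt ℝ g p) :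
    fderiv ℝ g p (-p.2, p.1) = 0 := by
  set c : ℝ → ℝ × ℝ := fun θ =>
    (Real.cos θ * p.1 - Real.sin θ * p.2, Real.sin θ * p.1 + Real.cos θ * p.2) with hcdef
  have hrad : ∀ θ, (c θ).1 ^ 2 + (c θ).2 ^ 2 = p.1 ^ 2 + p.2 ^ 2 := by
    intro θ
    have := Real.sin_sq_add_cos_sq θ
    simp only [hcdef]
    nlinarith [this]
  have hcmem : ∀ θ, c θ ∈ Ω := fun θ => hmem p hp _ (hrad θ)
  have hconst : ∀ θ, g (c θ) = g p := fun θ => hrot _ (hcmem θ) p hp (hrad θ)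
  have h1 : HasDerivAt (fun θ => g (c θ)) 0 0 := by
    have heq : (fun θ => g (c θ)) = fun _ => g p := funext hconst
    rw [heq]; exact hasDerivAt_const 0 _
  have hc0 : c 0 = p := by simp [hcdef]
  have hc : HasDerivAt c (-p.2, p.1) 0 := by
    have ha : HasDerivAt (fun θ => Real.cos θ * p.1 - Real.sin θ * p.2) (-p.2) 0 := by
      have := ((Real.hasDerivAt_cos 0).mul_const p.1).sub
        ((Real.hasDerivAt_sin 0).mul_const p.2)
      simp at this
      exact this
    have hb : HasDerivAt (fun θ => Real.sin θ * p.1 + Real.cos θ * p.2) p.1 0 := by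
      have := ((Real.hasDerivAt_sin 0).mul_const p.1).add
        ((Real.hasDerivAt_cos 0).mul_const p.2)
      simp at this
      exact this
    exact ha.prodMk hb
  have hgf : HasFDerivAt g (fderiv ℝ g p) (c 0) := by rw [hc0]; exact hd.hasFDerivAt
  have h2 : HasDerivAt (fun θ => g (c θ)) (fderiv ℝ g p (-p.2, p.1)) 0 :=
    hgf.comp_hasDerivAt 0 hc
  exact h2.unique h1
end M4

section M5
variable {Ω : Set (ℝ × ℝ)}

theorem Aint_rot (hstar : ∀ p ∈ Ω, ∀ t ∈ Set.Icc (0:ℝ) 1, t • p ∈ Ω)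
    {g : ℝ × ℝ → ℝ}
    (hrot : ∀ p ∈ Ω, ∀ q ∈ Ω, p.1 ^ 2 + p.2 ^ 2 = q.1 ^ 2 + q.2 ^ 2 → g p = g q) :
    ∀ p ∈ Ω, ∀ q ∈ Ω, p.1 ^ 2 + p.2 ^ 2 = q.1 ^ 2 + q.2 ^ 2 →
      Aint 1 g p = Aint 1 g q := by
  intro p hp q hq h
  apply intervalIntegral.integral_congr
  intro t ht
  rw [Set.uIcc_of_le (by norm_num : (0:ℝ) ≤ 1)] at ht
  have heq : g (t • p) = g (t • q) := by
    apply hrot _ (hstar p hp t ht) _ (hstar q hq t ht)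
    simp only [Prod.smul_fst, Prod.smul_snd, smul_eq_mul]
    linear_combination t ^ 2 * h
  simp [heq]
end M5

/-- A rotationally invariant Lorentzian warped product `𝕃(M,0,μ)` over a disk of radius
`R ∈ (0,+∞]` (with rotationally invariant `λ`, `μ`, `H`) admits an entire spacelike graph
with prescribed mean curvature `H`. -/
theorem entire_spacelike_graph_rotational
    (Ω : Set (ℝ × ℝ))
    (hΩ : Ω = Set.univ ∨ ∃ R : ℝ, 0 < R ∧ Ω = {p : ℝ × ℝ | p.1 ^ 2 + p.2 ^ 2 < R ^ 2})
    (lam μ H : ℝ × ℝ → ℝ)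
    (hlam : ContDiffOn ℝ (⊤ : ℕ∞) lam Ω) (hμ : ContDiffOn ℝ (⊤ : ℕ∞) μ Ω)
    (hH : ContDiffOn ℝ (⊤ : ℕ∞) H Ω)
    (hlampos : ∀ p ∈ Ω, 0 < lam p) (hμpos : ∀ p ∈ Ω, 0 < μ p)
    (hlamrot : ∀ p ∈ Ω, ∀ q ∈ Ω, p.1 ^ 2 + p.2 ^ 2 = q.1 ^ 2 + q.2 ^ 2 → lam p = lam q)
    (hμrot : ∀ p ∈ Ω, ∀ q ∈ Ω, p.1 ^ 2 + p.2 ^ 2 = q.1 ^ 2 + q.2 ^ 2 → μ p = μ q)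
    (hHrot : ∀ p ∈ Ω, ∀ q ∈ Ω, p.1 ^ 2 + p.2 ^ 2 = q.1 ^ 2 + q.2 ^ 2 → H p = H q) :
    ∃ v : ℝ × ℝ → ℝ, ContDiffOn ℝ (⊤ : ℕ∞) v Ω ∧
      (∀ p ∈ Ω, μ p ^ 2 * ((pdx v p) ^ 2 + (pdy v p) ^ 2) < lam p ^ 2) ∧
      (∀ p ∈ Ω,
        pdx (fun q => μ q ^ 2 * pdx v q /
          Real.sqrt (1 - μ q ^ 2 * ((pdx v q) ^ 2 + (pdy v q) ^ 2) / lam q ^ 2)) p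
        + pdy (fun q => μ q ^ 2 * pdy v q /
          Real.sqrt (1 - μ q ^ 2 * ((pdx v q) ^ 2 + (pdy v q) ^ 2) / lam q ^ 2)) p
        = 2 * H p * μ p * lam p ^ 2) := by
  -- basic geometry of Ω
  have hΩo : IsOpen Ω := by
    rcases hΩ with h | ⟨R, hR, h⟩
    · rw [h]; exact isOpen_univ
    · rw [h]; exact isOpen_lt (by fun_prop) continuous_const
  have hmem : ∀ p ∈ Ω, ∀ q : ℝ × ℝ, q.1 ^ 2 + q.2 ^ 2 = p.1 ^ 2 + p.2 ^ 2 → q ∈ Ω := by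
    rcases hΩ with h | ⟨R, hR, h⟩
    · simp [h]
    · intro p hp q hq
      rw [h] at hp ⊢
      simp only [Set.mem_setOf_eq] at *
      linarith
  have hstar : ∀ p ∈ Ω, ∀ t ∈ Set.Icc (0:ℝ) 1, t • p ∈ Ω := by
    rcases hΩ with h | ⟨R, hR, h⟩
    · simp [h]
    · intro p hp t ht
      rw [h] at hp ⊢
      simp only [Set.mem_setOf_eq, Prod.smul_fst, Prod.smul_snd, smul_eq_mul] at *
      nlinarith [mul_nonneg (by nlinarith [ht.1, ht.2] : (0:ℝ) ≤ 1 - t ^ 2)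
        (by positivity : (0:ℝ) ≤ p.1 ^ 2 + p.2 ^ 2), hp]
  have hdiff : ∀ (f : ℝ × ℝ → ℝ), ContDiffOn ℝ (⊤ : ℕ∞) f Ω → ∀ p ∈ Ω,
      DifferentiableAt ℝ f p := fun f hf p hp =>
    (hf.contDiffAt (hΩo.mem_nhds hp)).differentiableAt (by simp)
  -- the source term
  set w : ℝ × ℝ → ℝ := fun p => 2 * H p * μ p * lam p ^ 2 with hwdef
  have hwsm : ContDiffOn ℝ (⊤ : ℕ∞) w Ω :=
    ((contDiffOn_const.mul hH).mul hμ).mul (hlam.pow 2)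
  have hwrot : ∀ p ∈ Ω, ∀ q ∈ Ω, p.1 ^ 2 + p.2 ^ 2 = q.1 ^ 2 + q.2 ^ 2 → w p = w q := by
    intro p hp q hq h
    simp only [hwdef]
    rw [hHrot p hp q hq h, hμrot p hp q hq h, hlamrot p hp q hq h]
  -- Φ
  set Φ : ℝ × ℝ → ℝ := Aint 1 w with hΦdef
  have hΦsm : ContDiffOn ℝ (⊤ : ℕ∞) Φ Ω := contDiffOn_top_Aint hΩo hstar 1 hwsm
  have hΦrot := Aint_rot hstar hwrot
  rw [← hΦdef] at hΦrot
  have hΦid : ∀ p ∈ Ω, p.1 * fderiv ℝ Φ p (1,0) + p.2 * fderiv ℝ Φ p (0,1)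
      = w p - 2 * Φ p := by
    intro p hp
    have hkey := fderiv_Aint_apply_self hΩo hstar hwsm hp
    have hdec : fderiv ℝ Φ p p
        = p.1 * fderiv ℝ Φ p (1,0) + p.2 * fderiv ℝ Φ p (0,1) := by
      have hpe : (p.1 • ((1:ℝ),(0:ℝ)) + p.2 • ((0:ℝ),(1:ℝ))) = p := by
        simp [Prod.ext_iff]
      conv_lhs => rw [← hpe]
      rw [map_add, ContinuousLinearMap.map_smul, ContinuousLinearMap.map_smul]
      simp [smul_eq_mul]
    rw [← hdec, hΦdef]
    exact hkey
  -- denominators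
  set D : ℝ × ℝ → ℝ :=
    fun p => μ p ^ 4 + Φ p ^ 2 * μ p ^ 2 * (p.1 ^ 2 + p.2 ^ 2) / lam p ^ 2 with hDdef
  have hDpos : ∀ p ∈ Ω, 0 < D p := by
    intro p hp
    have h1 := hμpos p hp
    have h2 := hlampos p hp
    have h3 : 0 ≤ Φ p ^ 2 * μ p ^ 2 * (p.1 ^ 2 + p.2 ^ 2) / lam p ^ 2 := by positivity
    have h4 : 0 < μ p ^ 4 := by positivity
    simp only [hDdef]
    linarith
  have hDsm : ContDiffOn ℝ (⊤ : ℕ∞) D Ω := by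
    apply (hμ.pow 4).add
    apply ContDiffOn.div (((hΦsm.pow 2).mul (hμ.pow 2)).mul (by fun_prop)) (hlam.pow 2)
    intro p hp
    have := hlampos p hp
    positivity
  -- square root of D
  have hsqpos : ∀ p ∈ Ω, 0 < Real.sqrt (D p) := fun p hp => Real.sqrt_pos.2 (hDpos p hp)
  have hsq2 : ∀ p ∈ Ω, Real.sqrt (D p) ^ 2 = D p := fun p hp => Real.sq_sqrt (hDpos p hp).le
  have hsqsm : ContDiffOn ℝ (⊤ : ℕ∞) (fun p => Real.sqrt (D p)) Ω := by
    intro p hp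
    exact (Real.contDiffAt_sqrt (hDpos p hp).ne').comp_contDiffWithinAt p (hDsm p hp)
  -- ψ
  set ψ : ℝ × ℝ → ℝ := fun p => Φ p / Real.sqrt (D p) with hψdef
  have hψsm : ContDiffOn ℝ (⊤ : ℕ∞) ψ Ω :=
    hΦsm.div hsqsm (fun p hp => (hsqpos p hp).ne')
  have hψrot : ∀ p ∈ Ω, ∀ q ∈ Ω, p.1 ^ 2 + p.2 ^ 2 = q.1 ^ 2 + q.2 ^ 2 → ψ p = ψ q := by
    intro p hp q hq h
    have hD : D p = D q := by
      simp only [hDdef]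
      rw [hΦrot p hp q hq h, hμrot p hp q hq h, hlamrot p hp q hq h, h]
    simp only [hψdef]
    rw [hΦrot p hp q hq h, hD]
  -- B and v
  set B : ℝ × ℝ → ℝ := Aint 1 ψ with hBdef
  have hBsm : ContDiffOn ℝ (⊤ : ℕ∞) B Ω := contDiffOn_top_Aint hΩo hstar 1 hψsm
  have hBrot := Aint_rot hstar hψrot
  rw [← hBdef] at hBrot
  have hBid : ∀ p ∈ Ω, p.1 * fderiv ℝ B p (1,0) + p.2 * fderiv ℝ B p (0,1)
      = ψ p - 2 * B p := by
    intro p hp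
    have hkey := fderiv_Aint_apply_self hΩo hstar hψsm hp
    have hdec : fderiv ℝ B p p
        = p.1 * fderiv ℝ B p (1,0) + p.2 * fderiv ℝ B p (0,1) := by
      have hpe : (p.1 • ((1:ℝ),(0:ℝ)) + p.2 • ((0:ℝ),(1:ℝ))) = p := by
        simp [Prod.ext_iff]
      conv_lhs => rw [← hpe]
      rw [map_add, ContinuousLinearMap.map_smul, ContinuousLinearMap.map_smul]
      simp [smul_eq_mul]
    rw [← hdec, hBdef]
    exact hkey
  have hBtan : ∀ p ∈ Ω, -p.2 * fderiv ℝ B p (1,0) + p.1 * fderiv ℝ B p (0,1) = 0 := by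
    intro p hp
    have h0 := fderiv_tangent_zero hmem hBrot hp (hdiff B hBsm p hp)
    have hpe : ((-p.2) • ((1:ℝ),(0:ℝ)) + p.1 • ((0:ℝ),(1:ℝ))) = ((-p.2 : ℝ), p.1) := by
      simp [Prod.ext_iff]
    rw [← hpe, map_add, ContinuousLinearMap.map_smul, ContinuousLinearMap.map_smul] at h0
    simpa [smul_eq_mul] using h0
  set v : ℝ × ℝ → ℝ := fun p => B p * (p.1 ^ 2 + p.2 ^ 2) with hvdef
  have hvsm : ContDiffOn ℝ (⊤ : ℕ∞) v Ω := hBsm.mul (by fun_prop)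
  -- derivative of the squared radius
  have hr2d : ∀ p : ℝ × ℝ, HasFDerivAt (fun q : ℝ × ℝ => q.1 ^ 2 + q.2 ^ 2)
      ((p.1 • ContinuousLinearMap.fst ℝ ℝ ℝ + p.1 • ContinuousLinearMap.fst ℝ ℝ ℝ)
        + (p.2 • ContinuousLinearMap.snd ℝ ℝ ℝ + p.2 • ContinuousLinearMap.snd ℝ ℝ ℝ)) p := by
    intro p
    have h1 : HasFDerivAt (fun q : ℝ × ℝ => q.1) (ContinuousLinearMap.fst ℝ ℝ ℝ) p :=
      hasFDerivAt_fst
    have h2 : HasFDerivAt (fun q : ℝ × ℝ => q.2) (ContinuousLinearMap.snd ℝ ℝ ℝ) p :=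
      hasFDerivAt_snd
    have := (h1.mul h1).add (h2.mul h2)
    have hfun : (fun q : ℝ × ℝ => q.1 * q.1 + q.2 * q.2)
        = fun q : ℝ × ℝ => q.1 ^ 2 + q.2 ^ 2 := by
      funext q; ring
    rw [← hfun]
    exact this
  -- the gradient of v
  have hvd : ∀ p ∈ Ω, pdx v p = ψ p * p.1 ∧ pdy v p = ψ p * p.2 := by
    intro p hp
    have hB' : DifferentiableAt ℝ B p := hdiff B hBsm p hp
    have hr' : DifferentiableAt ℝ (fun q : ℝ × ℝ => q.1 ^ 2 + q.2 ^ 2) p :=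
      (hr2d p).differentiableAt
    have hf : fderiv ℝ v p = B p • fderiv ℝ (fun q : ℝ × ℝ => q.1 ^ 2 + q.2 ^ 2) p
        + (p.1 ^ 2 + p.2 ^ 2) • fderiv ℝ B p := by
      rw [hvdef]
      exact fderiv_mul hB' hr'
    have hrx : fderiv ℝ (fun q : ℝ × ℝ => q.1 ^ 2 + q.2 ^ 2) p (1,0) = 2 * p.1 := by
      rw [(hr2d p).fderiv]; simp; ring
    have hry : fderiv ℝ (fun q : ℝ × ℝ => q.1 ^ 2 + q.2 ^ 2) p (0,1) = 2 * p.2 := by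
      rw [(hr2d p).fderiv]; simp; ring
    have h1 := hBid p hp
    have h2 := hBtan p hp
    constructor
    · show fderiv ℝ v p (1,0) = ψ p * p.1
      rw [hf]
      simp only [ContinuousLinearMap.add_apply, ContinuousLinearMap.smul_apply, smul_eq_mul,
        hrx]
      linear_combination p.1 * h1 - p.2 * h2
    · show fderiv ℝ v p (0,1) = ψ p * p.2
      rw [hf]
      simp only [ContinuousLinearMap.add_apply, ContinuousLinearMap.smul_apply, smul_eq_mul,
        hry]
      linear_combination p.2 * h1 + p.1 * h2
  -- the spacelike condition
  have hspace : ∀ p ∈ Ω, μ p ^ 2 * ((pdx v p) ^ 2 + (pdy v p) ^ 2) < lam p ^ 2 := by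
    intro p hp
    obtain ⟨hx, hy⟩ := hvd p hp
    rw [hx, hy]
    have hs2 := hsq2 p hp
    have hm := hμpos p hp
    have hl := hlampos p hp
    have hs := hsqpos p hp
    have hDp := hDpos p hp
    have key : μ p ^ 2 * ((ψ p * p.1) ^ 2 + (ψ p * p.2) ^ 2)
        = μ p ^ 2 * Φ p ^ 2 * (p.1 ^ 2 + p.2 ^ 2) / D p := by
      simp only [hψdef]
      rw [← hs2]
      rw [Real.sqrt_sq hs.le]
      field_simp
    rw [key, div_lt_iff₀ hDp]
    have hexp : lam p ^ 2 * D p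
        = lam p ^ 2 * μ p ^ 4 + Φ p ^ 2 * μ p ^ 2 * (p.1 ^ 2 + p.2 ^ 2) := by
      simp only [hDdef]
      field_simp
    rw [hexp]
    nlinarith [mul_pos (pow_pos hl 2) (pow_pos hm 4)]
  -- the flux field coincides with Φ ⬝ id on Ω
  have hflux1 : ∀ q ∈ Ω, μ q ^ 2 * pdx v q /
      Real.sqrt (1 - μ q ^ 2 * ((pdx v q) ^ 2 + (pdy v q) ^ 2) / lam q ^ 2)
      = Φ q * q.1 := by
    intro q hq
    obtain ⟨hx, hy⟩ := hvd q hq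
    have hs2 := hsq2 q hq
    have hm := hμpos q hq
    have hl := hlampos q hq
    have hs := hsqpos q hq
    have hDp := hDpos q hq
    have hrel : D q * lam q ^ 2
        = μ q ^ 4 * lam q ^ 2 + Φ q ^ 2 * μ q ^ 2 * (q.1 ^ 2 + q.2 ^ 2) := by
      simp only [hDdef]
      field_simp
    have hin : 1 - μ q ^ 2 * ((pdx v q) ^ 2 + (pdy v q) ^ 2) / lam q ^ 2
        = (μ q ^ 2 / Real.sqrt (D q)) ^ 2 := by
      rw [hx, hy]
      have e1 : (ψ q * q.1) ^ 2 + (ψ q * q.2) ^ 2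
          = Φ q ^ 2 * (q.1 ^ 2 + q.2 ^ 2) / D q := by
        simp only [hψdef]
        conv_rhs => rw [← hs2]
        ring
      rw [e1, div_pow, hs2, eq_div_iff hDp.ne']
      simp only [hDdef] at hDp ⊢
      field_simp [hDp.ne', hl.ne']
      ring
    rw [hin, Real.sqrt_sq (by positivity), hx]
    simp only [hψdef]
    have hne : μ q ^ 2 / Real.sqrt (D q) ≠ 0 := (by positivity : (0:ℝ) < _).ne'
    rw [div_eq_iff hne]
    ring
  have hflux2 : ∀ q ∈ Ω, μ q ^ 2 * pdy v q /
      Real.sqrt (1 - μ q ^ 2 * ((pdx v q) ^ 2 + (pdy v q) ^ 2) / lam q ^ 2)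
      = Φ q * q.2 := by
    intro q hq
    obtain ⟨hx, hy⟩ := hvd q hq
    have hs2 := hsq2 q hq
    have hm := hμpos q hq
    have hl := hlampos q hq
    have hs := hsqpos q hq
    have hDp := hDpos q hq
    have hrel : D q * lam q ^ 2
        = μ q ^ 4 * lam q ^ 2 + Φ q ^ 2 * μ q ^ 2 * (q.1 ^ 2 + q.2 ^ 2) := by
      simp only [hDdef]
      field_simp
    have hin : 1 - μ q ^ 2 * ((pdx v q) ^ 2 + (pdy v q) ^ 2) / lam q ^ 2
        = (μ q ^ 2 / Real.sqrt (D q)) ^ 2 := by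
      rw [hx, hy]
      have e1 : (ψ q * q.1) ^ 2 + (ψ q * q.2) ^ 2
          = Φ q ^ 2 * (q.1 ^ 2 + q.2 ^ 2) / D q := by
        simp only [hψdef]
        conv_rhs => rw [← hs2]
        ring
      rw [e1, div_pow, hs2, eq_div_iff hDp.ne']
      simp only [hDdef] at hDp ⊢
      field_simp [hDp.ne', hl.ne']
      ring
    rw [hin, Real.sqrt_sq (by positivity), hy]
    simp only [hψdef]
    have hne : μ q ^ 2 / Real.sqrt (D q) ≠ 0 := (by positivity : (0:ℝ) < _).ne'
    rw [div_eq_iff hne]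
    ring
  -- the PDE
  refine ⟨v, hvsm, hspace, ?_⟩
  intro p hp
  have hΦd : DifferentiableAt ℝ Φ p := hdiff Φ hΦsm p hp
  have hfstd : DifferentiableAt ℝ (fun q : ℝ × ℝ => q.1) p := differentiable_fst.differentiableAt
  have hsndd : DifferentiableAt ℝ (fun q : ℝ × ℝ => q.2) p := differentiable_snd.differentiableAt
  have hEx : (fun q => μ q ^ 2 * pdx v q /
      Real.sqrt (1 - μ q ^ 2 * ((pdx v q) ^ 2 + (pdy v q) ^ 2) / lam q ^ 2))
      =ᶠ[nhds p] (fun q => Φ q * q.1) :=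
    Filter.eventuallyEq_of_mem (hΩo.mem_nhds hp) hflux1
  have hEy : (fun q => μ q ^ 2 * pdy v q /
      Real.sqrt (1 - μ q ^ 2 * ((pdx v q) ^ 2 + (pdy v q) ^ 2) / lam q ^ 2))
      =ᶠ[nhds p] (fun q => Φ q * q.2) :=
    Filter.eventuallyEq_of_mem (hΩo.mem_nhds hp) hflux2
  have hpdx : pdx (fun q => μ q ^ 2 * pdx v q /
      Real.sqrt (1 - μ q ^ 2 * ((pdx v q) ^ 2 + (pdy v q) ^ 2) / lam q ^ 2)) p
      = Φ p + p.1 * fderiv ℝ Φ p (1,0) := by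
    show fderiv ℝ _ p (1,0) = _
    rw [hEx.fderiv_eq]
    rw [fderiv_fun_mul hΦd hfstd]
    have : fderiv ℝ (fun q : ℝ × ℝ => q.1) p = ContinuousLinearMap.fst ℝ ℝ ℝ :=
      hasFDerivAt_fst.fderiv
    rw [this]
    simp only [ContinuousLinearMap.add_apply, ContinuousLinearMap.smul_apply, smul_eq_mul,
      ContinuousLinearMap.coe_fst']
    ring
  have hpdy : pdy (fun q => μ q ^ 2 * pdy v q /
      Real.sqrt (1 - μ q ^ 2 * ((pdx v q) ^ 2 + (pdy v q) ^ 2) / lam q ^ 2)) p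
      = Φ p + p.2 * fderiv ℝ Φ p (0,1) := by
    show fderiv ℝ _ p (0,1) = _
    rw [hEy.fderiv_eq]
    rw [fderiv_fun_mul hΦd hsndd]
    have : fderiv ℝ (fun q : ℝ × ℝ => q.2) p = ContinuousLinearMap.snd ℝ ℝ ℝ :=
      hasFDerivAt_snd.fderiv
    rw [this]
    simp only [ContinuousLinearMap.add_apply, ContinuousLinearMap.smul_apply, smul_eq_mul,
      ContinuousLinearMap.coe_snd']
    ring
  rw [hpdx, hpdy]
  have hid := hΦid p hp
  simp only [hwdef] at hid
  linarith [hid]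
end

section
/- Let I ⊆ ℝ be an open interval, let Ω = I × ℝ ⊆ ℝ² be the corresponding strip, and let λ, μ, H : Ω → ℝ be smooth functions depending only on the first coordinate x, with λ > 0 and μ > 0. Then there exists a smooth function v : Ω → ℝ satisfying the spacelike condition μ²(vₓ² + v_y²) < λ² on Ω and the prescribed mean curvature equation ∂ₓ(μ²vₓ/ω̃) + ∂_y(μ²v_y/ω̃) = 2Hμλ² on Ω, where ω̃ = √(1 − μ²(vₓ² + v_y²)/λ²); that is, the Lorentzian warped product 𝕃(M,0,μ) over M = (Ω, λ²(dx² + dy²)) admits an entire spacelike graph with prescribed mean curvature H. -/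
open MeasureTheory intervalIntegral

/-- FTC: derivative of a primitive of a function continuous on an open order-connected set. -/
lemma primitive_hasDerivAt {I : Set ℝ} (hI : IsOpen I) (hconn : I.OrdConnected)
    {x₀ : ℝ} (hx₀ : x₀ ∈ I) {a : ℝ → ℝ} (ha : ContinuousOn a I) :
    ∀ x ∈ I, HasDerivAt (fun x => ∫ t in x₀..x, a t) (a x) x := by
  intro x hx
  refine intervalIntegral.integral_hasDerivAt_right ?_ ?_ ?_
  · exact (ha.mono (hconn.uIcc_subset hx₀ hx)).intervalIntegrable
  · exact ContinuousOn.stronglyMeasurableAtFilter hI ha x hx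
  · exact ha.continuousAt (hI.mem_nhds hx)

/-- A primitive of a smooth function is smooth. -/
lemma primitive_contDiffOn {I : Set ℝ} (hI : IsOpen I) (hconn : I.OrdConnected)
    {x₀ : ℝ} (hx₀ : x₀ ∈ I) {a : ℝ → ℝ} (ha : ContDiffOn ℝ (⊤ : ℕ∞) a I) :
    ContDiffOn ℝ (⊤ : ℕ∞) (fun x => ∫ t in x₀..x, a t) I := by
  have hd := primitive_hasDerivAt hI hconn hx₀ ha.continuousOn
  rw [contDiffOn_infty_iff_deriv_of_isOpen hI]
  refine ⟨fun x hx => ((hd x hx).differentiableAt).differentiableWithinAt, ?_⟩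
  exact ha.congr fun x hx => (hd x hx).deriv

/-- The partial derivatives of a function of the first coordinate only. -/
lemma pdx_pdy_of_fst {F : ℝ → ℝ} {c : ℝ} {p : ℝ × ℝ} (hF : HasDerivAt F c p.1) :
    pdx (fun q => F q.1) p = c ∧ pdy (fun q => F q.1) p = 0 := by
  have h : HasFDerivAt (fun q : ℝ × ℝ => F q.1)
      (((1 : ℝ →L[ℝ] ℝ).smulRight c).comp (ContinuousLinearMap.fst ℝ ℝ ℝ)) p :=
    hF.hasFDerivAt.comp p hasFDerivAt_fst
  exact ⟨by rw [pdx, h.fderiv]; simp, by rw [pdy, h.fderiv]; simp⟩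

/-- The key algebraic identities for the flux `G = M²φ/ω̃` with `s = √(M²L²+G²)`. -/
lemma alg_ident (M L G s : ℝ) (hM : 0 < M) (hL : 0 < L) (hs : 0 < s)
    (hs2 : s ^ 2 = M ^ 2 * L ^ 2 + G ^ 2) :
    (M ^ 2 * ((G * L / (M * s)) ^ 2 + 0 ^ 2) < L ^ 2) ∧
    (M ^ 2 * (G * L / (M * s)) /
      Real.sqrt (1 - M ^ 2 * ((G * L / (M * s)) ^ 2 + 0 ^ 2) / L ^ 2) = G) := by
  have hkey : M ^ 2 * ((G * L / (M * s)) ^ 2 + 0 ^ 2) = G ^ 2 * L ^ 2 / (M ^ 2 * L ^ 2 + G ^ 2) := by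
    rw [← hs2]; field_simp; ring
  have hDpos : (0:ℝ) < M ^ 2 * L ^ 2 + G ^ 2 := by positivity
  constructor
  · rw [hkey, div_lt_iff₀ hDpos]
    nlinarith [sq_nonneg (M * L), mul_pos (mul_pos hM hM) (mul_pos hL hL)]
  · have h1 : 1 - M ^ 2 * ((G * L / (M * s)) ^ 2 + 0 ^ 2) / L ^ 2 = (M * L / s) ^ 2 := by
      rw [hkey, ← hs2]; field_simp; linear_combination hs2
    rw [h1, Real.sqrt_sq (by positivity)]
    field_simp

/-- A translationally invariant Lorentzian warped product `𝕃(M,0,μ)` over a strip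
`I × ℝ` (with `λ`, `μ`, `H` depending only on the first coordinate) admits an entire
spacelike graph with prescribed mean curvature `H`. -/
theorem entire_spacelike_graph_translational
    (I : Set ℝ) (hI_open : IsOpen I) (hI_ne : I.Nonempty) (hI_conn : I.OrdConnected)
    (lam μ H : ℝ × ℝ → ℝ)
    (hlam : ContDiffOn ℝ (⊤ : ℕ∞) lam (I ×ˢ (Set.univ : Set ℝ)))
    (hμ : ContDiffOn ℝ (⊤ : ℕ∞) μ (I ×ˢ (Set.univ : Set ℝ)))
    (hH : ContDiffOn ℝ (⊤ : ℕ∞) H (I ×ˢ (Set.univ : Set ℝ)))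
    (hlampos : ∀ p ∈ I ×ˢ (Set.univ : Set ℝ), 0 < lam p)
    (hμpos : ∀ p ∈ I ×ˢ (Set.univ : Set ℝ), 0 < μ p)
    (hlamtr : ∀ p q : ℝ × ℝ, p.1 = q.1 → lam p = lam q)
    (hμtr : ∀ p q : ℝ × ℝ, p.1 = q.1 → μ p = μ q)
    (hHtr : ∀ p q : ℝ × ℝ, p.1 = q.1 → H p = H q) :
    ∃ v : ℝ × ℝ → ℝ, ContDiffOn ℝ (⊤ : ℕ∞) v (I ×ˢ (Set.univ : Set ℝ)) ∧
      (∀ p ∈ I ×ˢ (Set.univ : Set ℝ),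
        μ p ^ 2 * ((pdx v p) ^ 2 + (pdy v p) ^ 2) < lam p ^ 2) ∧
      (∀ p ∈ I ×ˢ (Set.univ : Set ℝ),
        pdx (fun q => μ q ^ 2 * pdx v q /
          Real.sqrt (1 - μ q ^ 2 * ((pdx v q) ^ 2 + (pdy v q) ^ 2) / lam q ^ 2)) p
        + pdy (fun q => μ q ^ 2 * pdy v q /
          Real.sqrt (1 - μ q ^ 2 * ((pdx v q) ^ 2 + (pdy v q) ^ 2) / lam q ^ 2)) p
        = 2 * H p * μ p * lam p ^ 2) := by
  obtain ⟨x₀, hx₀⟩ := hI_ne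
  set Ω : Set (ℝ × ℝ) := I ×ˢ (Set.univ : Set ℝ) with hΩ
  have hΩ_open : IsOpen Ω := hI_open.prod isOpen_univ
  have hemb : ContDiff ℝ (⊤ : ℕ∞) (fun x : ℝ => (x, (0 : ℝ))) :=
    contDiff_id.prodMk contDiff_const
  have hmaps : ∀ x ∈ I, (x, (0:ℝ)) ∈ Ω := fun x hx => ⟨hx, Set.mem_univ _⟩
  set m : ℝ → ℝ := fun x => μ (x, 0) with hm_def
  set l : ℝ → ℝ := fun x => lam (x, 0) with hl_def
  have hm : ContDiffOn ℝ (⊤ : ℕ∞) m I := hμ.comp hemb.contDiffOn hmaps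
  have hl : ContDiffOn ℝ (⊤ : ℕ∞) l I := hlam.comp hemb.contDiffOn hmaps
  have hhH : ContDiffOn ℝ (⊤ : ℕ∞) (fun x => H (x, 0)) I := hH.comp hemb.contDiffOn hmaps
  have hmpos : ∀ x ∈ I, 0 < m x := fun x hx => hμpos _ (hmaps x hx)
  have hlpos : ∀ x ∈ I, 0 < l x := fun x hx => hlampos _ (hmaps x hx)
  set a : ℝ → ℝ := fun x => 2 * H (x, 0) * m x * l x ^ 2 with ha_def
  have ha : ContDiffOn ℝ (⊤ : ℕ∞) a I :=
    ((contDiffOn_const.mul hhH).mul hm).mul (hl.pow 2)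
  set g : ℝ → ℝ := fun x => ∫ t in x₀..x, a t with hg_def
  have hg_deriv : ∀ x ∈ I, HasDerivAt g (a x) x :=
    primitive_hasDerivAt hI_open hI_conn hx₀ ha.continuousOn
  have hg : ContDiffOn ℝ (⊤ : ℕ∞) g I := primitive_contDiffOn hI_open hI_conn hx₀ ha
  set S : ℝ → ℝ := fun x => m x ^ 2 * l x ^ 2 + g x ^ 2 with hS_def
  have hSpos : ∀ x ∈ I, 0 < S x := fun x hx => by
    have := hmpos x hx; have := hlpos x hx; positivity
  have hS : ContDiffOn ℝ (⊤ : ℕ∞) S I := ((hm.pow 2).mul (hl.pow 2)).add (hg.pow 2)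
  set φ : ℝ → ℝ := fun x => g x * l x / (m x * Real.sqrt (S x)) with hφ_def
  have hsqrtpos : ∀ x ∈ I, 0 < Real.sqrt (S x) := fun x hx => Real.sqrt_pos.2 (hSpos x hx)
  have hφ : ContDiffOn ℝ (⊤ : ℕ∞) φ I := by
    refine (hg.mul hl).div (hm.mul (hS.sqrt fun x hx => (hSpos x hx).ne')) ?_
    exact fun x hx => (mul_pos (hmpos x hx) (hsqrtpos x hx)).ne'
  set F : ℝ → ℝ := fun x => ∫ t in x₀..x, φ t with hF_def
  have hF_deriv : ∀ x ∈ I, HasDerivAt F (φ x) x :=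
    primitive_hasDerivAt hI_open hI_conn hx₀ hφ.continuousOn
  have hF : ContDiffOn ℝ (⊤ : ℕ∞) F I := primitive_contDiffOn hI_open hI_conn hx₀ hφ
  set v : ℝ × ℝ → ℝ := fun p => F p.1 with hv_def
  -- partial derivatives of v
  have hv : ∀ p : ℝ × ℝ, p ∈ Ω → pdx v p = φ p.1 ∧ pdy v p = 0 :=
    fun p hp => pdx_pdy_of_fst (hF_deriv p.1 hp.1)
  -- the algebraic facts at each point
  have halg : ∀ x ∈ I, (m x ^ 2 * ((φ x) ^ 2 + 0 ^ 2) < l x ^ 2) ∧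
      (m x ^ 2 * φ x / Real.sqrt (1 - m x ^ 2 * ((φ x) ^ 2 + 0 ^ 2) / l x ^ 2) = g x) := by
    intro x hx
    have hs2 : Real.sqrt (S x) ^ 2 = m x ^ 2 * l x ^ 2 + g x ^ 2 := Real.sq_sqrt (hSpos x hx).le
    exact alg_ident (m x) (l x) (g x) (Real.sqrt (S x)) (hmpos x hx) (hlpos x hx)
      (hsqrtpos x hx) hs2
  refine ⟨v, hF.comp contDiff_fst.contDiffOn fun p hp => hp.1, ?_, ?_⟩
  · -- spacelike condition
    intro p hp
    rw [(hv p hp).1, (hv p hp).2, hμtr p (p.1, 0) rfl, hlamtr p (p.1, 0) rfl]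
    exact (halg p.1 hp.1).1
  · -- prescribed mean curvature equation
    intro p hp
    have hmem : Ω ∈ nhds p := hΩ_open.mem_nhds hp
    -- the first flux function coincides with g ∘ fst on Ω
    have heq1 : ∀ q ∈ Ω, (fun q => μ q ^ 2 * pdx v q /
        Real.sqrt (1 - μ q ^ 2 * ((pdx v q) ^ 2 + (pdy v q) ^ 2) / lam q ^ 2)) q = g q.1 := by
      intro q hq
      simp only [(hv q hq).1, (hv q hq).2, hμtr q (q.1, 0) rfl, hlamtr q (q.1, 0) rfl]
      exact (halg q.1 hq.1).2
    have heq2 : ∀ q ∈ Ω, (fun q => μ q ^ 2 * pdy v q /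
        Real.sqrt (1 - μ q ^ 2 * ((pdx v q) ^ 2 + (pdy v q) ^ 2) / lam q ^ 2)) q = 0 := by
      intro q hq
      simp [(hv q hq).2]
    have hev1 : (fun q => μ q ^ 2 * pdx v q /
        Real.sqrt (1 - μ q ^ 2 * ((pdx v q) ^ 2 + (pdy v q) ^ 2) / lam q ^ 2))
        =ᶠ[nhds p] (fun q => g q.1) := Filter.eventuallyEq_of_mem hmem heq1
    have hev2 : (fun q => μ q ^ 2 * pdy v q /
        Real.sqrt (1 - μ q ^ 2 * ((pdx v q) ^ 2 + (pdy v q) ^ 2) / lam q ^ 2))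
        =ᶠ[nhds p] (fun _ => (0:ℝ)) := Filter.eventuallyEq_of_mem hmem heq2
    have h1 : pdx (fun q => μ q ^ 2 * pdx v q /
        Real.sqrt (1 - μ q ^ 2 * ((pdx v q) ^ 2 + (pdy v q) ^ 2) / lam q ^ 2)) p = a p.1 := by
      rw [pdx, hev1.fderiv_eq]
      exact (pdx_pdy_of_fst (hg_deriv p.1 hp.1)).1
    have h2 : pdy (fun q => μ q ^ 2 * pdy v q /
        Real.sqrt (1 - μ q ^ 2 * ((pdx v q) ^ 2 + (pdy v q) ^ 2) / lam q ^ 2)) p = 0 := by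
      rw [pdy, hev2.fderiv_eq]
      simp
    rw [h1, h2, add_zero, ha_def]
    rw [hμtr p (p.1, 0) rfl, hlamtr p (p.1, 0) rfl, hHtr p (p.1, 0) rfl]
end

section
/- Let ã, b̃ : ℝ² → ℝ be smooth functions with inf_{ℝ²} |∂ₓb̃ − ∂_y ã| > 0. Then there is no smooth function v : ℝ² → ℝ satisfying (vₓ − ã)² + (v_y − b̃)² < 1 at every point of ℝ². In other words, if the bundle curvature τ = −½(∂ₓb̃ − ∂_y ã) satisfies inf |τ| > 0, the Lorentzian Killing submersion 𝕃(ℝ², τ, 1) over the Euclidean plane admits no entire spacelike graph. -/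
open MeasureTheory Set


lemma hasDerivAt_pdx (f : ℝ × ℝ → ℝ) (hf : ContDiff ℝ (⊤ : ℕ∞) f) (y x : ℝ) :
    HasDerivAt (fun t => f (t, y)) (pdx f (x, y)) x := by
  have h1 : HasFDerivAt f (fderiv ℝ f (x, y)) (x, y) :=
    (hf.differentiable (by simp) (x, y)).hasFDerivAt
  have h2 : HasDerivAt (fun t : ℝ => (t, y)) ((1 : ℝ), (0 : ℝ)) x :=
    HasDerivAt.prodMk (hasDerivAt_id x) (hasDerivAt_const x y)
  exact h1.comp_hasDerivAt x h2

lemma hasDerivAt_pdy (f : ℝ × ℝ → ℝ) (hf : ContDiff ℝ (⊤ : ℕ∞) f) (x y : ℝ) :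
    HasDerivAt (fun t => f (x, t)) (pdy f (x, y)) y := by
  have h1 : HasFDerivAt f (fderiv ℝ f (x, y)) (x, y) :=
    (hf.differentiable (by simp) (x, y)).hasFDerivAt
  have h2 : HasDerivAt (fun t : ℝ => (x, t)) ((0 : ℝ), (1 : ℝ)) y :=
    HasDerivAt.prodMk (hasDerivAt_const y x) (hasDerivAt_id y)
  exact h1.comp_hasDerivAt y h2

lemma continuous_pdx (f : ℝ × ℝ → ℝ) (hf : ContDiff ℝ (⊤ : ℕ∞) f) :
    Continuous (pdx f) :=
  (hf.continuous_fderiv (by simp)).clm_apply continuous_const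

lemma continuous_pdy (f : ℝ × ℝ → ℝ) (hf : ContDiff ℝ (⊤ : ℕ∞) f) :
    Continuous (pdy f) :=
  (hf.continuous_fderiv (by simp)).clm_apply continuous_const

/-- If the bundle curvature `τ = -½(∂ₓb̃ - ∂_yã)` satisfies `inf |τ| > 0`, the Lorentzian
Killing submersion `𝕃(ℝ², τ, 1)` over the Euclidean plane admits no entire spacelike
graph. -/
theorem no_entire_spacelike_graph_inf_tau_positive
    (ta tb : ℝ × ℝ → ℝ)
    (hta : ContDiff ℝ (⊤ : ℕ∞) ta) (htb : ContDiff ℝ (⊤ : ℕ∞) tb)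
    (hinf : ∃ c : ℝ, 0 < c ∧ ∀ p : ℝ × ℝ,
      c ≤ |pdx tb p - pdy ta p|) :
    ¬ ∃ v : ℝ × ℝ → ℝ, ContDiff ℝ (⊤ : ℕ∞) v ∧
      ∀ p : ℝ × ℝ, (pdx v p - ta p) ^ 2 + (pdy v p - tb p) ^ 2 < 1 := by
  rintro ⟨v, hv, hsp⟩
  obtain ⟨c, hc, hw⟩ := hinf
  set w : ℝ × ℝ → ℝ := fun p => pdx tb p - pdy ta p with hwdef
  have cta : Continuous ta := hta.continuous
  have ctb : Continuous tb := htb.continuous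
  have cpx_v : Continuous (pdx v) := continuous_pdx v hv
  have cpy_v : Continuous (pdy v) := continuous_pdy v hv
  have cpx_tb : Continuous (pdx tb) := continuous_pdx tb htb
  have cpy_ta : Continuous (pdy ta) := continuous_pdy ta hta
  have cw : Continuous w := cpx_tb.sub cpy_ta
  set L : ℝ := 5 / c with hLdef
  have hL : 0 < L := by positivity
  -- pointwise bounds
  have hbx : ∀ p, |ta p - pdx v p| ≤ 1 := by
    intro p; have h := hsp p
    rw [abs_le]; constructor <;> nlinarith [sq_nonneg (pdy v p - tb p)]
  have hby : ∀ p, |tb p - pdy v p| ≤ 1 := by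
    intro p; have h := hsp p
    rw [abs_le]; constructor <;> nlinarith [sq_nonneg (pdx v p - ta p)]
  -- one-variable slices are continuous
  have cslx : ∀ (F : ℝ × ℝ → ℝ), Continuous F → ∀ y : ℝ,
      Continuous fun x => F (x, y) := fun F hF y =>
    hF.comp (continuous_id.prodMk continuous_const)
  have csly : ∀ (F : ℝ × ℝ → ℝ), Continuous F → ∀ x : ℝ,
      Continuous fun y => F (x, y) := fun F hF x =>
    hF.comp (continuous_const.prodMk continuous_id)
  -- FTC in each variable
  have A : ∀ (f : ℝ × ℝ → ℝ), ContDiff ℝ (⊤ : ℕ∞) f → ∀ y : ℝ,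
      ∫ x in (0:ℝ)..L, pdx f (x, y) = f (L, y) - f (0, y) := by
    intro f hf y
    exact intervalIntegral.integral_eq_sub_of_hasDerivAt
      (fun x _ => hasDerivAt_pdx f hf y x)
      ((cslx (pdx f) (continuous_pdx f hf) y).intervalIntegrable 0 L)
  have B : ∀ (f : ℝ × ℝ → ℝ), ContDiff ℝ (⊤ : ℕ∞) f → ∀ x : ℝ,
      ∫ y in (0:ℝ)..L, pdy f (x, y) = f (x, L) - f (x, 0) := by
    intro f hf x
    exact intervalIntegral.integral_eq_sub_of_hasDerivAt
      (fun y _ => hasDerivAt_pdy f hf x y)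
      ((csly (pdy f) (continuous_pdy f hf) x).intervalIntegrable 0 L)
  -- continuity of the parametric integral
  have cont_param : ∀ (F : ℝ × ℝ → ℝ), Continuous F →
      Continuous fun y => ∫ x in (0:ℝ)..L, F (x, y) := by
    intro F hF
    exact intervalIntegral.continuous_parametric_intervalIntegral_of_continuous'
      (f := fun y x => F (x, y)) (hF.comp continuous_swap) 0 L
  -- Fubini swap for pdy ta
  have swap_ta : (∫ y in (0:ℝ)..L, ∫ x in (0:ℝ)..L, pdy ta (x, y))
      = ∫ x in (0:ℝ)..L, ∫ y in (0:ℝ)..L, pdy ta (x, y) := by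
    simp only [intervalIntegral.integral_of_le hL.le]
    have hint : Integrable (Function.uncurry fun y x => pdy ta (x, y))
        ((volume.restrict (Ioc (0:ℝ) L)).prod (volume.restrict (Ioc (0:ℝ) L))) := by
      rw [Measure.prod_restrict, ← Measure.volume_eq_prod]
      have hcont : Continuous fun p : ℝ × ℝ => pdy ta (p.2, p.1) :=
        cpy_ta.comp continuous_swap
      exact (hcont.continuousOn.integrableOn_compact
          (isCompact_Icc.prod isCompact_Icc)).mono_set
        (Set.prod_mono Ioc_subset_Icc_self Ioc_subset_Icc_self)
    exact MeasureTheory.integral_integral_swap hint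
  set D : ℝ := ∫ y in (0:ℝ)..L, ∫ x in (0:ℝ)..L, w (x, y) with hDdef
  -- inner split
  have step_inner : ∀ y : ℝ, (∫ x in (0:ℝ)..L, w (x, y))
      = (tb (L, y) - tb (0, y)) - ∫ x in (0:ℝ)..L, pdy ta (x, y) := by
    intro y
    have : (∫ x in (0:ℝ)..L, w (x, y))
        = (∫ x in (0:ℝ)..L, pdx tb (x, y)) - ∫ x in (0:ℝ)..L, pdy ta (x, y) := by
      rw [← intervalIntegral.integral_sub
        ((cslx (pdx tb) cpx_tb y).intervalIntegrable 0 L)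
        ((cslx (pdy ta) cpy_ta y).intervalIntegrable 0 L)]
    rw [this, A tb htb y]
  have hD2 : D = (∫ y in (0:ℝ)..L, (tb (L, y) - tb (0, y)))
      - ∫ y in (0:ℝ)..L, ∫ x in (0:ℝ)..L, pdy ta (x, y) := by
    rw [hDdef, intervalIntegral.integral_congr (fun y _ => step_inner y),
      intervalIntegral.integral_sub (f := fun y => tb (L, y) - tb (0, y))
        (((csly tb ctb L).sub (csly tb ctb 0)).intervalIntegrable 0 L)
        ((cont_param (pdy ta) cpy_ta).intervalIntegrable 0 L)]
  have hD3 : D = (∫ y in (0:ℝ)..L, (tb (L, y) - tb (0, y)))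
      - ∫ x in (0:ℝ)..L, (ta (x, L) - ta (x, 0)) := by
    rw [hD2, swap_ta, intervalIntegral.integral_congr (fun x _ => B ta hta x)]
  -- boundary rewritings using v
  have hB1 : (∫ y in (0:ℝ)..L, ((tb (L, y) - pdy v (L, y)) - (tb (0, y) - pdy v (0, y))))
      = (∫ y in (0:ℝ)..L, (tb (L, y) - tb (0, y)))
        - ((v (L, L) - v (L, 0)) - (v (0, L) - v (0, 0))) := by
    rw [← B v hv L, ← B v hv 0,
      ← intervalIntegral.integral_sub
        ((csly (pdy v) cpy_v L).intervalIntegrable 0 L)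
        ((csly (pdy v) cpy_v 0).intervalIntegrable 0 L),
      ← intervalIntegral.integral_sub (f := fun y => tb (L, y) - tb (0, y))
          (g := fun y => pdy v (L, y) - pdy v (0, y))
        (((csly tb ctb L).sub (csly tb ctb 0)).intervalIntegrable 0 L)
        (((csly (pdy v) cpy_v L).sub (csly (pdy v) cpy_v 0)).intervalIntegrable 0 L)]
    exact intervalIntegral.integral_congr fun y _ => by ring
  have hB2 : (∫ x in (0:ℝ)..L, ((ta (x, L) - pdx v (x, L)) - (ta (x, 0) - pdx v (x, 0))))
      = (∫ x in (0:ℝ)..L, (ta (x, L) - ta (x, 0)))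
        - ((v (L, L) - v (0, L)) - (v (L, 0) - v (0, 0))) := by
    rw [← A v hv L, ← A v hv 0,
      ← intervalIntegral.integral_sub
        ((cslx (pdx v) cpx_v L).intervalIntegrable 0 L)
        ((cslx (pdx v) cpx_v 0).intervalIntegrable 0 L),
      ← intervalIntegral.integral_sub (f := fun x => ta (x, L) - ta (x, 0))
          (g := fun x => pdx v (x, L) - pdx v (x, 0))
        (((cslx ta cta L).sub (cslx ta cta 0)).intervalIntegrable 0 L)
        (((cslx (pdx v) cpx_v L).sub (cslx (pdx v) cpx_v 0)).intervalIntegrable 0 L)]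
    exact intervalIntegral.integral_congr fun x _ => by ring
  set E1 : ℝ := ∫ y in (0:ℝ)..L, ((tb (L, y) - pdy v (L, y)) - (tb (0, y) - pdy v (0, y)))
  set E2 : ℝ := ∫ x in (0:ℝ)..L, ((ta (x, L) - pdx v (x, L)) - (ta (x, 0) - pdx v (x, 0)))
  have hDE : D = E1 - E2 := by rw [hD3]; linarith [hB1, hB2]
  have hE1 : |E1| ≤ 2 * L := by
    have := intervalIntegral.norm_integral_le_of_norm_le_const
      (C := 2) (f := fun y => (tb (L, y) - pdy v (L, y)) - (tb (0, y) - pdy v (0, y)))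
      (a := 0) (b := L) ?_
    · rw [Real.norm_eq_abs] at this
      calc |E1| ≤ 2 * |L - 0| := this
        _ = 2 * L := by rw [sub_zero, abs_of_pos hL]
    · intro y _
      have h1 := hby (L, y); have h2 := hby (0, y)
      rw [abs_le] at h1 h2
      rw [Real.norm_eq_abs, abs_le]
      exact ⟨by linarith [h1.1, h2.2], by linarith [h1.2, h2.1]⟩
  have hE2 : |E2| ≤ 2 * L := by
    have := intervalIntegral.norm_integral_le_of_norm_le_const
      (C := 2) (f := fun x => (ta (x, L) - pdx v (x, L)) - (ta (x, 0) - pdx v (x, 0)))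
      (a := 0) (b := L) ?_
    · rw [Real.norm_eq_abs] at this
      calc |E2| ≤ 2 * |L - 0| := this
        _ = 2 * L := by rw [sub_zero, abs_of_pos hL]
    · intro x _
      have h1 := hbx (x, L); have h2 := hbx (x, 0)
      rw [abs_le] at h1 h2
      rw [Real.norm_eq_abs, abs_le]
      exact ⟨by linarith [h1.1, h2.2], by linarith [h1.2, h2.1]⟩
  have hupper : |D| ≤ 4 * L := by
    rw [hDE]
    calc |E1 - E2| ≤ |E1| + |E2| := abs_sub _ _
      _ ≤ 4 * L := by linarith
  -- sign dichotomy
  have dich : (∀ p : ℝ × ℝ, c ≤ w p) ∨ (∀ p : ℝ × ℝ, w p ≤ -c) := by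
    by_cases hsgn : c ≤ w (0, 0)
    · left; intro p
      by_contra hlt
      push_neg at hlt
      have hneg : c ≤ -w p := (le_abs.mp (hw p)).resolve_left (not_le.mpr hlt)
      have h0 : (0 : ℝ) ∈ Icc (w p) (w (0, 0)) := ⟨by linarith, by linarith⟩
      obtain ⟨q, hq⟩ := intermediate_value_univ p (0, 0) cw h0
      have hcq : c ≤ |w q| := hw q
      rw [hq] at hcq; simp at hcq; linarith
    · right; intro p
      have h00 : c ≤ -w (0, 0) := (le_abs.mp (hw (0, 0))).resolve_left hsgn
      by_contra hlt
      push_neg at hlt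
      have hpos : c ≤ w p := by
        rcases le_abs.mp (hw p) with h | h
        · exact h
        · have h' : c ≤ -w p := h
          linarith
      have h0 : (0 : ℝ) ∈ Icc (w (0, 0)) (w p) := ⟨by linarith, by linarith⟩
      obtain ⟨q, hq⟩ := intermediate_value_univ (0, 0) p cw h0
      have hcq : c ≤ |w q| := hw q
      rw [hq] at hcq; simp at hcq; linarith
  -- lower bound on |D|
  have hconstL : ∀ s : ℝ, (∫ _ in (0:ℝ)..L, s) = L * s := by
    intro s; rw [intervalIntegral.integral_const, smul_eq_mul, sub_zero]
  have hlower : c * L * L ≤ |D| := by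
    rcases dich with hpos | hneg
    · have inner_lb : ∀ y : ℝ, c * L ≤ ∫ x in (0:ℝ)..L, w (x, y) := by
        intro y
        have h := intervalIntegral.integral_mono_on (μ := volume) (a := 0) (b := L)
          (f := fun _ => c) (g := fun x => w (x, y)) hL.le
          intervalIntegrable_const ((cslx w cw y).intervalIntegrable 0 L)
          (fun x _ => hpos (x, y))
        rw [hconstL c] at h; linarith
      have h := intervalIntegral.integral_mono_on (μ := volume) (a := 0) (b := L)
        (f := fun _ => c * L) (g := fun y => ∫ x in (0:ℝ)..L, w (x, y)) hL.le
        intervalIntegrable_const ((cont_param w cw).intervalIntegrable 0 L)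
        (fun y _ => inner_lb y)
      rw [hconstL (c * L)] at h
      have : c * L * L ≤ D := by rw [hDdef]; linarith
      exact this.trans (le_abs_self D)
    · have inner_ub : ∀ y : ℝ, (∫ x in (0:ℝ)..L, w (x, y)) ≤ -(c * L) := by
        intro y
        have h := intervalIntegral.integral_mono_on (μ := volume) (a := 0) (b := L)
          (f := fun x => w (x, y)) (g := fun _ => -c) hL.le
          ((cslx w cw y).intervalIntegrable 0 L) intervalIntegrable_const
          (fun x _ => hneg (x, y))
        rw [hconstL (-c)] at h; linarith
      have h := intervalIntegral.integral_mono_on (μ := volume) (a := 0) (b := L)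
        (f := fun y => ∫ x in (0:ℝ)..L, w (x, y)) (g := fun _ => -(c * L)) hL.le
        ((cont_param w cw).intervalIntegrable 0 L) intervalIntegrable_const
        (fun y _ => inner_ub y)
      rw [hconstL (-(c * L))] at h
      have hDle : D ≤ -(c * L * L) := by rw [hDdef]; linarith
      calc c * L * L ≤ -D := by linarith
        _ ≤ |D| := neg_le_abs D
  have hcL : c * L = 5 := by
    rw [hLdef]; field_simp
  nlinarith [hlower, hupper, hL]
end

section
/- Let R ∈ (0, +∞], let Ω ⊆ ℝ² be the open disk of radius R centered at the origin, let λ, μ : [0,R) → ℝ be smooth positive radial profiles (defining λ(x,y) = λ(√(x²+y²)) and μ(x,y) = μ(√(x²+y²)) on Ω), let H ≥ 0 be a constant, and set c(ρ) = ρ⁻²∫₀^ρ s·λ(s)²·μ(s) ds for ρ ∈ (0,R). If there exists ρ₀ ∈ (0,R) with 2Hρ₀·c(ρ₀) > λ(ρ₀)·μ(ρ₀), then there is no smooth function u : Ω → ℝ satisfying ∂ₓ(μ²uₓ/ω) + ∂_y(μ²u_y/ω) = 2Hμλ² on Ω, where ω = √(1 + μ²(uₓ² + u_y²)/λ²); that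 is, 𝔼(M,0,μ) admits no entire graph of constant mean curvature H when H exceeds half the Cheeger constant of M with density μ. -/
/-- The rotationally invariant function on the plane induced by a radial profile. -/
noncomputable def radialLift (f : ℝ → ℝ) (p : ℝ × ℝ) : ℝ :=
  f (Real.sqrt (p.1 ^ 2 + p.2 ^ 2))

/-- `c(ρ) = ρ⁻² ∫₀^ρ s·λ(s)²·μ(s) ds`. -/
noncomputable def cProfile (lam mu : ℝ → ℝ) (ρ : ℝ) : ℝ :=
  (ρ ^ 2)⁻¹ * ∫ s in (0:ℝ)..ρ, s * lam s ^ 2 * mu s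

open Real MeasureTheory intervalIntegral

section AuxPolar

/-- Polar coordinate chart. -/
noncomputable def polC (ρ θ : ℝ) : ℝ × ℝ := (ρ * Real.cos θ, ρ * Real.sin θ)

/-- Radial flux integrand `ρ · (F·n)` through the circle of radius `ρ`. -/
noncomputable def polP (F₁ F₂ : ℝ × ℝ → ℝ) (ρ θ : ℝ) : ℝ :=
  ρ * Real.cos θ * F₁ (polC ρ θ) + ρ * Real.sin θ * F₂ (polC ρ θ)

/-- Tangential component of the vector field along the circle. -/
noncomputable def polQ (F₁ F₂ : ℝ × ℝ → ℝ) (ρ θ : ℝ) : ℝ :=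
  -Real.sin θ * F₁ (polC ρ θ) + Real.cos θ * F₂ (polC ρ θ)

/-- `∂ρ` of `polP`. -/
noncomputable def polPr (F₁ F₂ : ℝ × ℝ → ℝ) (ρ θ : ℝ) : ℝ :=
  Real.cos θ * F₁ (polC ρ θ) + Real.sin θ * F₂ (polC ρ θ)
  + ρ * Real.cos θ * (fderiv ℝ F₁ (polC ρ θ) (Real.cos θ, Real.sin θ))
  + ρ * Real.sin θ * (fderiv ℝ F₂ (polC ρ θ) (Real.cos θ, Real.sin θ))

/-- `∂θ` of `polQ`. -/
noncomputable def polQt (F₁ F₂ : ℝ × ℝ → ℝ) (ρ θ : ℝ) : ℝ :=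
  (-Real.cos θ * F₁ (polC ρ θ)
    + (-Real.sin θ) * (fderiv ℝ F₁ (polC ρ θ) (-(ρ * Real.sin θ), ρ * Real.cos θ)))
  + (-Real.sin θ * F₂ (polC ρ θ)
    + Real.cos θ * (fderiv ℝ F₂ (polC ρ θ) (-(ρ * Real.sin θ), ρ * Real.cos θ)))

theorem polP_hasDerivAt (F₁ F₂ : ℝ × ℝ → ℝ) (ρ θ : ℝ)
    (h₁ : DifferentiableAt ℝ F₁ (polC ρ θ)) (h₂ : DifferentiableAt ℝ F₂ (polC ρ θ)) :
    HasDerivAt (fun r => polP F₁ F₂ r θ) (polPr F₁ F₂ ρ θ) ρ := by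
  simp only [polP, polPr, polC] at *
  have hc : HasDerivAt (fun r : ℝ => ((r * Real.cos θ, r * Real.sin θ) : ℝ × ℝ))
      (Real.cos θ, Real.sin θ) ρ :=
    (hasDerivAt_mul_const (Real.cos θ)).prodMk (hasDerivAt_mul_const (Real.sin θ))
  have hF₁ : HasDerivAt (fun r : ℝ => F₁ (r * Real.cos θ, r * Real.sin θ))
      (fderiv ℝ F₁ (ρ * Real.cos θ, ρ * Real.sin θ) (Real.cos θ, Real.sin θ)) ρ :=
    h₁.hasFDerivAt.comp_hasDerivAt ρ hc
  have hF₂ : HasDerivAt (fun r : ℝ => F₂ (r * Real.cos θ, r * Real.sin θ))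
      (fderiv ℝ F₂ (ρ * Real.cos θ, ρ * Real.sin θ) (Real.cos θ, Real.sin θ)) ρ :=
    h₂.hasFDerivAt.comp_hasDerivAt ρ hc
  have := ((hasDerivAt_mul_const (Real.cos θ)).mul hF₁).add
    ((hasDerivAt_mul_const (Real.sin θ)).mul hF₂)
  simp only [Pi.mul_def, Pi.add_def] at this
  exact this.congr_deriv (by ring)

theorem polQ_hasDerivAt (F₁ F₂ : ℝ × ℝ → ℝ) (ρ θ : ℝ)
    (h₁ : DifferentiableAt ℝ F₁ (polC ρ θ)) (h₂ : DifferentiableAt ℝ F₂ (polC ρ θ)) :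
    HasDerivAt (fun t => polQ F₁ F₂ ρ t) (polQt F₁ F₂ ρ θ) θ := by
  simp only [polQ, polQt, polC] at *
  have hc : HasDerivAt (fun t : ℝ => ((ρ * Real.cos t, ρ * Real.sin t) : ℝ × ℝ))
      (-(ρ * Real.sin θ), ρ * Real.cos θ) θ := by
    have h1 : HasDerivAt (fun t : ℝ => ρ * Real.cos t) (-(ρ * Real.sin θ)) θ := by
      simpa [mul_comm, neg_mul, mul_neg] using (Real.hasDerivAt_cos θ).const_mul ρ
    have h2 : HasDerivAt (fun t : ℝ => ρ * Real.sin t) (ρ * Real.cos θ) θ :=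
      (Real.hasDerivAt_sin θ).const_mul ρ
    exact h1.prodMk h2
  have hF₁ : HasDerivAt (fun t : ℝ => F₁ (ρ * Real.cos t, ρ * Real.sin t))
      (fderiv ℝ F₁ (ρ * Real.cos θ, ρ * Real.sin θ) (-(ρ * Real.sin θ), ρ * Real.cos θ)) θ :=
    h₁.hasFDerivAt.comp_hasDerivAt θ hc
  have hF₂ : HasDerivAt (fun t : ℝ => F₂ (ρ * Real.cos t, ρ * Real.sin t))
      (fderiv ℝ F₂ (ρ * Real.cos θ, ρ * Real.sin θ) (-(ρ * Real.sin θ), ρ * Real.cos θ)) θ :=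
    h₂.hasFDerivAt.comp_hasDerivAt θ hc
  have hs : HasDerivAt (fun t : ℝ => -Real.sin t) (-Real.cos θ) θ := (Real.hasDerivAt_sin θ).neg
  have := (hs.mul hF₁).add ((Real.hasDerivAt_cos θ).mul hF₂)
  simp only [Pi.mul_def, Pi.add_def] at this
  convert this using 1 <;> ring

/-- The polar divergence identity: `∂ρ(ρ G_r) + ∂θ G_θ = ρ · div F`. -/
theorem polPr_add_polQt (F₁ F₂ : ℝ × ℝ → ℝ) (ρ θ : ℝ) :
    polPr F₁ F₂ ρ θ + polQt F₁ F₂ ρ θ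
      = ρ * (fderiv ℝ F₁ (polC ρ θ) (1, 0) + fderiv ℝ F₂ (polC ρ θ) (0, 1)) := by
  simp only [polPr, polQt]
  set L₁ := fderiv ℝ F₁ (polC ρ θ)
  set L₂ := fderiv ℝ F₂ (polC ρ θ)
  have hmap : ∀ (L : ℝ × ℝ →L[ℝ] ℝ) (a x y : ℝ), a * L (x, y) = L (a * x, a * y) := by
    intro L a x y
    simpa [Prod.smul_mk, smul_eq_mul] using (L.map_smul a (x, y)).symm
  have hadd : ∀ (L : ℝ × ℝ →L[ℝ] ℝ) (x y x' y' : ℝ),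
      L (x, y) + L (x', y') = L (x + x', y + y') := by
    intro L x y x' y'; rw [← L.map_add, Prod.mk_add_mk]
  have pyth := Real.sin_sq_add_cos_sq θ
  have key : (ρ * Real.cos θ * (L₁ (Real.cos θ, Real.sin θ))
        + (-Real.sin θ) * (L₁ (-(ρ * Real.sin θ), ρ * Real.cos θ)))
      + (ρ * Real.sin θ * (L₂ (Real.cos θ, Real.sin θ))
        + Real.cos θ * (L₂ (-(ρ * Real.sin θ), ρ * Real.cos θ)))
      = ρ * (L₁ (1, 0) + L₂ (0, 1)) := by
    rw [hmap, hmap, hmap, hmap, hadd, hadd, mul_add, hmap, hmap]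
    have e1 : ((ρ * Real.cos θ * Real.cos θ + -Real.sin θ * -(ρ * Real.sin θ),
        ρ * Real.cos θ * Real.sin θ + -Real.sin θ * (ρ * Real.cos θ)) : ℝ × ℝ)
        = (ρ * 1, ρ * 0) := by
      rw [Prod.mk.injEq]; exact ⟨by linear_combination ρ * pyth, by ring⟩
    have e2 : ((ρ * Real.sin θ * Real.cos θ + Real.cos θ * -(ρ * Real.sin θ),
        ρ * Real.sin θ * Real.sin θ + Real.cos θ * (ρ * Real.cos θ)) : ℝ × ℝ)
        = (ρ * 0, ρ * 1) := by
      rw [Prod.mk.injEq]; exact ⟨by ring, by linear_combination ρ * pyth⟩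
    rw [e1, e2]
  linarith [key]

theorem polC_continuous : Continuous (fun z : ℝ × ℝ => polC z.1 z.2) := by
  unfold polC
  exact (continuous_fst.mul (Real.continuous_cos.comp continuous_snd)).prodMk
    (continuous_fst.mul (Real.continuous_sin.comp continuous_snd))

theorem polP_continuousAt (F₁ F₂ : ℝ × ℝ → ℝ) (z : ℝ × ℝ)
    (h₁ : ContinuousAt F₁ (polC z.1 z.2)) (h₂ : ContinuousAt F₂ (polC z.1 z.2)) :
    ContinuousAt (fun w : ℝ × ℝ => polP F₁ F₂ w.1 w.2) z := by
  unfold polP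
  have hc : ContinuousAt (fun w : ℝ × ℝ => polC w.1 w.2) z := polC_continuous.continuousAt
  exact ((continuousAt_fst.mul ((Real.continuous_cos.comp continuous_snd).continuousAt)).mul
      (ContinuousAt.comp (f := fun w : ℝ × ℝ => polC w.1 w.2) h₁ hc)).add
    ((continuousAt_fst.mul ((Real.continuous_sin.comp continuous_snd).continuousAt)).mul
      (ContinuousAt.comp (f := fun w : ℝ × ℝ => polC w.1 w.2) h₂ hc))

theorem polPr_continuousAt (F₁ F₂ : ℝ × ℝ → ℝ) (z : ℝ × ℝ)
    (h₁ : ContDiffAt ℝ (⊤ : ℕ∞) F₁ (polC z.1 z.2))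
    (h₂ : ContDiffAt ℝ (⊤ : ℕ∞) F₂ (polC z.1 z.2)) :
    ContinuousAt (fun w : ℝ × ℝ => polPr F₁ F₂ w.1 w.2) z := by
  unfold polPr
  have hc : ContinuousAt (fun w : ℝ × ℝ => polC w.1 w.2) z := polC_continuous.continuousAt
  have hcos : ContinuousAt (fun w : ℝ × ℝ => Real.cos w.2) z :=
    (Real.continuous_cos.comp continuous_snd).continuousAt
  have hsin : ContinuousAt (fun w : ℝ × ℝ => Real.sin w.2) z :=
    (Real.continuous_sin.comp continuous_snd).continuousAt
  have hv : ContinuousAt (fun w : ℝ × ℝ => ((Real.cos w.2, Real.sin w.2) : ℝ × ℝ)) z :=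
    hcos.prodMk hsin
  have hd₁ : ContinuousAt (fun w : ℝ × ℝ => fderiv ℝ F₁ (polC w.1 w.2)) z :=
    ((h₁.fderiv_right (m := (⊤ : ℕ∞)) (le_of_eq ENat.coe_top_add_one)).continuousAt).comp (f := fun w : ℝ × ℝ => polC w.1 w.2) hc
  have hd₂ : ContinuousAt (fun w : ℝ × ℝ => fderiv ℝ F₂ (polC w.1 w.2)) z :=
    ((h₂.fderiv_right (m := (⊤ : ℕ∞)) (le_of_eq ENat.coe_top_add_one)).continuousAt).comp (f := fun w : ℝ × ℝ => polC w.1 w.2) hc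
  have ha₁ : ContinuousAt
      (fun w : ℝ × ℝ => fderiv ℝ F₁ (polC w.1 w.2) ((Real.cos w.2, Real.sin w.2) : ℝ × ℝ)) z :=
    (isBoundedBilinearMap_apply.continuous.continuousAt).comp (hd₁.prodMk hv)
  have ha₂ : ContinuousAt
      (fun w : ℝ × ℝ => fderiv ℝ F₂ (polC w.1 w.2) ((Real.cos w.2, Real.sin w.2) : ℝ × ℝ)) z :=
    (isBoundedBilinearMap_apply.continuous.continuousAt).comp (hd₂.prodMk hv)
  exact (((hcos.mul (ContinuousAt.comp (f := fun w : ℝ × ℝ => polC w.1 w.2) h₁.continuousAt hc)).add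
      (hsin.mul (ContinuousAt.comp (f := fun w : ℝ × ℝ => polC w.1 w.2) h₂.continuousAt hc))).add
      ((continuousAt_fst.mul hcos).mul ha₁)).add
      ((continuousAt_fst.mul hsin).mul ha₂)

theorem polQt_continuousAt (F₁ F₂ : ℝ × ℝ → ℝ) (z : ℝ × ℝ)
    (h₁ : ContDiffAt ℝ (⊤ : ℕ∞) F₁ (polC z.1 z.2))
    (h₂ : ContDiffAt ℝ (⊤ : ℕ∞) F₂ (polC z.1 z.2)) :
    ContinuousAt (fun w : ℝ × ℝ => polQt F₁ F₂ w.1 w.2) z := by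
  unfold polQt
  have hc : ContinuousAt (fun w : ℝ × ℝ => polC w.1 w.2) z := polC_continuous.continuousAt
  have hcos : ContinuousAt (fun w : ℝ × ℝ => Real.cos w.2) z :=
    (Real.continuous_cos.comp continuous_snd).continuousAt
  have hsin : ContinuousAt (fun w : ℝ × ℝ => Real.sin w.2) z :=
    (Real.continuous_sin.comp continuous_snd).continuousAt
  have hv : ContinuousAt
      (fun w : ℝ × ℝ => ((-(w.1 * Real.sin w.2), w.1 * Real.cos w.2) : ℝ × ℝ)) z :=
    ((continuousAt_fst.mul hsin).neg).prodMk (continuousAt_fst.mul hcos)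
  have hd₁ : ContinuousAt (fun w : ℝ × ℝ => fderiv ℝ F₁ (polC w.1 w.2)) z :=
    ((h₁.fderiv_right (m := (⊤ : ℕ∞)) (le_of_eq ENat.coe_top_add_one)).continuousAt).comp (f := fun w : ℝ × ℝ => polC w.1 w.2) hc
  have hd₂ : ContinuousAt (fun w : ℝ × ℝ => fderiv ℝ F₂ (polC w.1 w.2)) z :=
    ((h₂.fderiv_right (m := (⊤ : ℕ∞)) (le_of_eq ENat.coe_top_add_one)).continuousAt).comp (f := fun w : ℝ × ℝ => polC w.1 w.2) hc
  have ha₁ : ContinuousAt (fun w : ℝ × ℝ =>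
      fderiv ℝ F₁ (polC w.1 w.2) ((-(w.1 * Real.sin w.2), w.1 * Real.cos w.2) : ℝ × ℝ)) z :=
    (isBoundedBilinearMap_apply.continuous.continuousAt).comp (hd₁.prodMk hv)
  have ha₂ : ContinuousAt (fun w : ℝ × ℝ =>
      fderiv ℝ F₂ (polC w.1 w.2) ((-(w.1 * Real.sin w.2), w.1 * Real.cos w.2) : ℝ × ℝ)) z :=
    (isBoundedBilinearMap_apply.continuous.continuousAt).comp (hd₂.prodMk hv)
  exact (((hcos.neg.mul (ContinuousAt.comp (f := fun w : ℝ × ℝ => polC w.1 w.2) h₁.continuousAt hc)).add (hsin.neg.mul ha₁))).add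
    (((hsin.neg.mul (ContinuousAt.comp (f := fun w : ℝ × ℝ => polC w.1 w.2) h₂.continuousAt hc))).add (hcos.mul ha₂))

/-- The Cauchy–Schwarz flux bound for the CMC graph vector field. -/
theorem flux_bound (L M px py a b : ℝ) (hL : 0 < L) (hM : 0 < M) (hab : a ^ 2 + b ^ 2 = 1) :
    a * (M ^ 2 * px / Real.sqrt (1 + M ^ 2 * (px ^ 2 + py ^ 2) / L ^ 2))
    + b * (M ^ 2 * py / Real.sqrt (1 + M ^ 2 * (px ^ 2 + py ^ 2) / L ^ 2)) ≤ L * M := by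
  set w : ℝ := 1 + M ^ 2 * (px ^ 2 + py ^ 2) / L ^ 2 with hw
  have hw1 : 1 ≤ w := by
    rw [hw]
    have : 0 ≤ M ^ 2 * (px ^ 2 + py ^ 2) / L ^ 2 := by positivity
    linarith
  have hs2 : Real.sqrt w ^ 2 = w := Real.sq_sqrt (by linarith)
  have hs1 : 1 ≤ Real.sqrt w := by nlinarith [Real.sqrt_nonneg w]
  set s := Real.sqrt w with hsdef
  have hkey : (M ^ 2 * px / s) ^ 2 + (M ^ 2 * py / s) ^ 2 ≤ (L * M) ^ 2 := by
    have e : (M ^ 2 * px / s) ^ 2 + (M ^ 2 * py / s) ^ 2 = M ^ 4 * (px ^ 2 + py ^ 2) / w := by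
      rw [div_pow, div_pow, hs2]; ring
    rw [e, div_le_iff₀ (by linarith)]
    have hL2 : (0 : ℝ) < L ^ 2 := by positivity
    have : (L * M) ^ 2 * w = L ^ 2 * M ^ 2 + M ^ 4 * (px ^ 2 + py ^ 2) * (L ^ 2 / L ^ 2) := by
      rw [hw]; ring
    rw [this, div_self (ne_of_gt hL2)]
    nlinarith
  nlinarith [sq_nonneg (a * (M ^ 2 * py / s) - b * (M ^ 2 * px / s)), mul_pos hL hM,
    sq_nonneg (a * (M ^ 2 * px / s) + b * (M ^ 2 * py / s) - L * M),
    sq_nonneg (a * (M ^ 2 * px / s) + b * (M ^ 2 * py / s) + L * M)]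

/-- Fubini for iterated interval integrals of a function continuous on a rectangle. -/
theorem swap_integrals (f : ℝ → ℝ → ℝ) (a b c d : ℝ) (hab : a ≤ b) (hcd : c ≤ d)
    (hcont : ContinuousOn (fun z : ℝ × ℝ => f z.1 z.2) (Set.Icc a b ×ˢ Set.Icc c d)) :
    (∫ x in a..b, ∫ y in c..d, f x y) = ∫ y in c..d, ∫ x in a..b, f x y := by
  rw [integral_of_le hab, integral_of_le hcd]
  simp_rw [integral_of_le hab, integral_of_le hcd]
  apply MeasureTheory.integral_integral_swap
  rw [Measure.prod_restrict, ← Measure.volume_eq_prod]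
  exact (hcont.integrableOn_compact (isCompact_Icc.prod isCompact_Icc)).mono_set
    (Set.prod_mono Set.Ioc_subset_Icc_self Set.Ioc_subset_Icc_self)

end AuxPolar

/-- Non-existence of entire graphs of constant mean curvature `H ≥ 0` in the rotationally
invariant warped product `𝔼(M,0,μ)` when the causality condition fails at some radius
`ρ₀ ∈ (0,R)` (equivalently when `H > ½·Ch(M,μ)`). -/
theorem no_entire_rotational_H_graph
    (S : Set ℝ) (hS : S = Set.Ici 0 ∨ ∃ R : ℝ, 0 < R ∧ S = Set.Ico 0 R)
    (lam mu : ℝ → ℝ)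
    (hlam : ContDiffOn ℝ (⊤ : ℕ∞) lam S) (hmu : ContDiffOn ℝ (⊤ : ℕ∞) mu S)
    (hlampos : ∀ r ∈ S, 0 < lam r) (hmupos : ∀ r ∈ S, 0 < mu r)
    (H : ℝ) (hH : 0 ≤ H)
    (hfail : ∃ ρ₀ ∈ S, 0 < ρ₀ ∧ lam ρ₀ * mu ρ₀ < 2 * H * ρ₀ * cProfile lam mu ρ₀) :
    ¬ ∃ u : ℝ × ℝ → ℝ,
      ContDiffOn ℝ (⊤ : ℕ∞) u {p : ℝ × ℝ | Real.sqrt (p.1 ^ 2 + p.2 ^ 2) ∈ S} ∧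
      (∀ p ∈ {p : ℝ × ℝ | Real.sqrt (p.1 ^ 2 + p.2 ^ 2) ∈ S},
        pdx (fun q => radialLift mu q ^ 2 * pdx u q /
          Real.sqrt (1 + radialLift mu q ^ 2 * ((pdx u q) ^ 2 + (pdy u q) ^ 2) /
            radialLift lam q ^ 2)) p
        + pdy (fun q => radialLift mu q ^ 2 * pdy u q /
          Real.sqrt (1 + radialLift mu q ^ 2 * ((pdx u q) ^ 2 + (pdy u q) ^ 2) /
            radialLift lam q ^ 2)) p
        = 2 * H * radialLift mu p * radialLift lam p ^ 2) := by
  rintro ⟨u, hu, hpde⟩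
  obtain ⟨ρ₀, hρ₀S, hρ₀pos, hlt⟩ := hfail
  set U : Set (ℝ × ℝ) := {p : ℝ × ℝ | Real.sqrt (p.1 ^ 2 + p.2 ^ 2) ∈ S} with hUdef
  set F₁ : ℝ × ℝ → ℝ := fun q => radialLift mu q ^ 2 * pdx u q /
      Real.sqrt (1 + radialLift mu q ^ 2 * ((pdx u q) ^ 2 + (pdy u q) ^ 2) /
        radialLift lam q ^ 2) with hF₁def
  set F₂ : ℝ × ℝ → ℝ := fun q => radialLift mu q ^ 2 * pdy u q /
      Real.sqrt (1 + radialLift mu q ^ 2 * ((pdx u q) ^ 2 + (pdy u q) ^ 2) /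
        radialLift lam q ^ 2) with hF₂def
  have hπ := Real.pi_pos
  have h2π : (0:ℝ) ≤ 2 * Real.pi := by linarith
  -- Basic facts about S and U
  have hIcc : Set.Icc 0 ρ₀ ⊆ S := by
    rcases hS with h | ⟨R, hR, h⟩
    · rw [h]; exact fun x hx => hx.1
    · rw [h] at hρ₀S ⊢
      exact fun x hx => ⟨hx.1, lt_of_le_of_lt hx.2 hρ₀S.2⟩
  have hSnhds : ∀ r ∈ S, 0 < r → S ∈ nhds r := by
    intro r hrS hr
    rcases hS with h | ⟨R, hR, h⟩
    · rw [h]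
      exact Filter.mem_of_superset (isOpen_Ioi.mem_nhds hr) Set.Ioi_subset_Ici_self
    · rw [h] at hrS ⊢
      exact Filter.mem_of_superset (isOpen_Ioo.mem_nhds ⟨hr, hrS.2⟩) Set.Ioo_subset_Ico_self
  have hUopen : IsOpen U := by
    rcases hS with h | ⟨R, hR, h⟩
    · have hUuniv : U = Set.univ := by
        ext p; simp [hUdef, h, Real.sqrt_nonneg]
      rw [hUuniv]; exact isOpen_univ
    · have hUlt : U = {p : ℝ × ℝ | Real.sqrt (p.1 ^ 2 + p.2 ^ 2) < R} := by
        ext p; simp [hUdef, h, Set.mem_Ico, Real.sqrt_nonneg]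
      rw [hUlt]
      exact isOpen_lt (Real.continuous_sqrt.comp
        ((continuous_fst.pow 2).add (continuous_snd.pow 2))) continuous_const
  have hnorm : ∀ ρ θ : ℝ, 0 ≤ ρ →
      Real.sqrt ((ρ * Real.cos θ) ^ 2 + (ρ * Real.sin θ) ^ 2) = ρ := by
    intro ρ θ h0
    have e : (ρ * Real.cos θ) ^ 2 + (ρ * Real.sin θ) ^ 2 = ρ ^ 2 := by
      linear_combination ρ ^ 2 * Real.sin_sq_add_cos_sq θ
    rw [e, Real.sqrt_sq h0]
  have hmemU : ∀ ρ θ : ℝ, 0 ≤ ρ → ρ ∈ S → polC ρ θ ∈ U := by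
    intro ρ θ h0 hρS
    simp only [hUdef, Set.mem_setOf_eq, polC]
    rw [hnorm ρ θ h0]
    exact hρS
  have hne0 : ∀ ρ θ : ℝ, 0 < ρ → polC ρ θ ≠ 0 := by
    intro ρ θ hρ h
    have e1 : ρ * Real.cos θ = 0 := by
      have := congrArg Prod.fst h; simpa [polC] using this
    have e2 : ρ * Real.sin θ = 0 := by
      have := congrArg Prod.snd h; simpa [polC] using this
    nlinarith [e1, e2, Real.sin_sq_add_cos_sq θ, mul_pos hρ hρ]
  have hradC : ∀ (f : ℝ → ℝ) (ρ θ : ℝ), 0 ≤ ρ → radialLift f (polC ρ θ) = f ρ := by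
    intro f ρ θ h0
    simp only [radialLift, polC]
    rw [hnorm ρ θ h0]
  -- Smoothness of the flux vector field away from the origin
  have key : ∀ p : ℝ × ℝ, p ∈ U → p ≠ 0 →
      ContDiffAt ℝ (⊤ : ℕ∞) F₁ p ∧ ContDiffAt ℝ (⊤ : ℕ∞) F₂ p := by
    intro p hpU hp0
    have hr2 : 0 < p.1 ^ 2 + p.2 ^ 2 := by
      rcases eq_or_ne p.1 0 with h1 | h1
      · have h2 : p.2 ≠ 0 := by
          intro h2; exact hp0 (Prod.ext_iff.mpr ⟨h1, h2⟩)
        have h3 : 0 < p.2 ^ 2 := by positivity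
        nlinarith [sq_nonneg p.1]
      · have h3 : 0 < p.1 ^ 2 := by positivity
        nlinarith [sq_nonneg p.2]
    have hrS : Real.sqrt (p.1 ^ 2 + p.2 ^ 2) ∈ S := by simpa [hUdef] using hpU
    have hrpos : 0 < Real.sqrt (p.1 ^ 2 + p.2 ^ 2) := Real.sqrt_pos.mpr hr2
    have hnb := hSnhds _ hrS hrpos
    have hsq : ContDiffAt ℝ (⊤ : ℕ∞) (fun q : ℝ × ℝ => Real.sqrt (q.1 ^ 2 + q.2 ^ 2)) p :=
      (Real.contDiffAt_sqrt (ne_of_gt hr2)).comp p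
        (((contDiff_fst.pow 2).add (contDiff_snd.pow 2)).contDiffAt)
    have hlamAt : ContDiffAt ℝ (⊤ : ℕ∞) (radialLift lam) p :=
      (hlam.contDiffAt hnb).comp p hsq
    have hmuAt : ContDiffAt ℝ (⊤ : ℕ∞) (radialLift mu) p :=
      (hmu.contDiffAt hnb).comp p hsq
    have huAt : ContDiffAt ℝ (⊤ : ℕ∞) u p := hu.contDiffAt (hUopen.mem_nhds hpU)
    have hpdxAt : ContDiffAt ℝ (⊤ : ℕ∞) (pdx u) p := by
      unfold pdx
      exact (huAt.fderiv_right (le_refl _)).clm_apply contDiffAt_const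
    have hpdyAt : ContDiffAt ℝ (⊤ : ℕ∞) (pdy u) p := by
      unfold pdy
      exact (huAt.fderiv_right (le_refl _)).clm_apply contDiffAt_const
    have hlamp : 0 < radialLift lam p := hlampos _ hrS
    have hmup : 0 < radialLift mu p := hmupos _ hrS
    have hwAt : ContDiffAt ℝ (⊤ : ℕ∞) (fun q => 1 + radialLift mu q ^ 2 *
        ((pdx u q) ^ 2 + (pdy u q) ^ 2) / radialLift lam q ^ 2) p :=
      contDiffAt_const.add (((hmuAt.pow 2).mul ((hpdxAt.pow 2).add (hpdyAt.pow 2))).div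
        (hlamAt.pow 2) (pow_ne_zero 2 (ne_of_gt hlamp)))
    have hwpos : 0 < 1 + radialLift mu p ^ 2 * ((pdx u p) ^ 2 + (pdy u p) ^ 2) /
        radialLift lam p ^ 2 := by
      have h5 : 0 ≤ radialLift mu p ^ 2 * ((pdx u p) ^ 2 + (pdy u p) ^ 2) /
          radialLift lam p ^ 2 := by positivity
      linarith
    have hsqrtAt : ContDiffAt ℝ (⊤ : ℕ∞) (fun q => Real.sqrt (1 + radialLift mu q ^ 2 *
        ((pdx u q) ^ 2 + (pdy u q) ^ 2) / radialLift lam q ^ 2)) p :=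
      (Real.contDiffAt_sqrt (ne_of_gt hwpos)).comp p hwAt
    have hsqrtpos : 0 < Real.sqrt (1 + radialLift mu p ^ 2 * ((pdx u p) ^ 2 + (pdy u p) ^ 2) /
        radialLift lam p ^ 2) := Real.sqrt_pos.mpr hwpos
    constructor
    · rw [hF₁def]
      exact ((hmuAt.pow 2).mul hpdxAt).div hsqrtAt (ne_of_gt hsqrtpos)
    · rw [hF₂def]
      exact ((hmuAt.pow 2).mul hpdyAt).div hsqrtAt (ne_of_gt hsqrtpos)
  have hdiff : ∀ ρ θ : ℝ, 0 < ρ → ρ ∈ S →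
      DifferentiableAt ℝ F₁ (polC ρ θ) ∧ DifferentiableAt ℝ F₂ (polC ρ θ) := by
    intro ρ θ hρ hρS
    obtain ⟨k1, k2⟩ := key _ (hmemU ρ θ hρ.le hρS) (hne0 ρ θ hρ)
    have h1 : (1 : WithTop ℕ∞) ≤ ((⊤ : ℕ∞) : WithTop ℕ∞) := by
      exact_mod_cast (le_top : (1:ℕ∞) ≤ ⊤)
    exact ⟨k1.differentiableAt (by simp), k2.differentiableAt (by simp)⟩
  -- Pointwise flux bound
  have hb : ∀ q : ℝ × ℝ, q ∈ U → ∀ a b : ℝ, a ^ 2 + b ^ 2 = 1 →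
      a * F₁ q + b * F₂ q ≤ radialLift lam q * radialLift mu q := by
    intro q hq a b hab
    have hrS : Real.sqrt (q.1 ^ 2 + q.2 ^ 2) ∈ S := by simpa [hUdef] using hq
    have hlamq : 0 < radialLift lam q := hlampos _ hrS
    have hmuq : 0 < radialLift mu q := hmupos _ hrS
    rw [hF₁def, hF₂def]
    exact flux_bound _ _ _ _ _ _ hlamq hmuq hab
  have hPbound : ∀ ρ θ : ℝ, 0 ≤ ρ → ρ ∈ S →
      polP F₁ F₂ ρ θ ≤ ρ * (lam ρ * mu ρ) ∧ -(ρ * (lam ρ * mu ρ)) ≤ polP F₁ F₂ ρ θ := by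
    intro ρ θ h0 hρS
    have hq : polC ρ θ ∈ U := hmemU ρ θ h0 hρS
    have pyth := Real.sin_sq_add_cos_sq θ
    have h1 := hb _ hq (Real.cos θ) (Real.sin θ) (by linarith)
    have h2 := hb _ hq (-Real.cos θ) (-Real.sin θ) (by linear_combination pyth)
    rw [hradC lam ρ θ h0, hradC mu ρ θ h0] at h1 h2
    constructor
    · have h3 := mul_le_mul_of_nonneg_left h1 h0
      simp only [polP]
      nlinarith [h3]
    · have h3 := mul_le_mul_of_nonneg_left h2 h0
      simp only [polP]
      nlinarith [h3]
  -- The divergence identity in polar coordinates, using the PDE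
  have hdiv : ∀ ρ θ : ℝ, 0 < ρ → ρ ∈ S →
      polPr F₁ F₂ ρ θ + polQt F₁ F₂ ρ θ = 2 * H * (ρ * lam ρ ^ 2 * mu ρ) := by
    intro ρ θ hρ hρS
    have hq : polC ρ θ ∈ U := hmemU ρ θ hρ.le hρS
    have hp := hpde _ hq
    rw [polPr_add_polQt]
    have e1 : fderiv ℝ F₁ (polC ρ θ) (1, 0) = pdx F₁ (polC ρ θ) := rfl
    have e2 : fderiv ℝ F₂ (polC ρ θ) (0, 1) = pdy F₂ (polC ρ θ) := rfl
    rw [e1, e2, hp, hradC lam ρ θ hρ.le, hradC mu ρ θ hρ.le]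
    ring
  -- Continuity helpers
  have hcomp1 : ∀ θ ρ : ℝ, 0 < ρ → ρ ∈ S → ContinuousAt (fun r : ℝ => polPr F₁ F₂ r θ) ρ := by
    intro θ ρ hρ hρS
    obtain ⟨k1, k2⟩ := key _ (hmemU ρ θ hρ.le hρS) (hne0 ρ θ hρ)
    have h := polPr_continuousAt F₁ F₂ (ρ, θ) k1 k2
    exact ContinuousAt.comp (f := fun r : ℝ => ((r, θ) : ℝ × ℝ)) h
      ((continuous_id.prodMk continuous_const).continuousAt)
  have hcomp2 : ∀ ρ : ℝ, 0 < ρ → ρ ∈ S → ∀ θ : ℝ,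
      ContinuousAt (fun t : ℝ => polPr F₁ F₂ ρ t) θ := by
    intro ρ hρ hρS θ
    obtain ⟨k1, k2⟩ := key _ (hmemU ρ θ hρ.le hρS) (hne0 ρ θ hρ)
    have h := polPr_continuousAt F₁ F₂ (ρ, θ) k1 k2
    exact ContinuousAt.comp (f := fun t : ℝ => ((ρ, t) : ℝ × ℝ)) h
      ((continuous_const.prodMk continuous_id).continuousAt)
  have hcompQt : ∀ ρ : ℝ, 0 < ρ → ρ ∈ S → ∀ θ : ℝ,
      ContinuousAt (fun t : ℝ => polQt F₁ F₂ ρ t) θ := by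
    intro ρ hρ hρS θ
    obtain ⟨k1, k2⟩ := key _ (hmemU ρ θ hρ.le hρS) (hne0 ρ θ hρ)
    have h := polQt_continuousAt F₁ F₂ (ρ, θ) k1 k2
    exact ContinuousAt.comp (f := fun t : ℝ => ((ρ, t) : ℝ × ℝ)) h
      ((continuous_const.prodMk continuous_id).continuousAt)
  have hcompP : ∀ ρ : ℝ, 0 < ρ → ρ ∈ S → ∀ θ : ℝ,
      ContinuousAt (fun t : ℝ => polP F₁ F₂ ρ t) θ := by
    intro ρ hρ hρS θ
    obtain ⟨k1, k2⟩ := key _ (hmemU ρ θ hρ.le hρS) (hne0 ρ θ hρ)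
    have h1 : (1 : WithTop ℕ∞) ≤ ((⊤ : ℕ∞) : WithTop ℕ∞) := by
      exact_mod_cast (le_top : (1:ℕ∞) ≤ ⊤)
    have h := polP_continuousAt F₁ F₂ (ρ, θ) k1.continuousAt k2.continuousAt
    exact ContinuousAt.comp (f := fun t : ℝ => ((ρ, t) : ℝ × ℝ)) h
      ((continuous_const.prodMk continuous_id).continuousAt)
  -- Bounds on the profile
  obtain ⟨Mb, hMb1, hMbl, hMbm⟩ : ∃ Mb : ℝ, 1 ≤ Mb ∧ (∀ r ∈ Set.Icc (0:ℝ) ρ₀, lam r ≤ Mb) ∧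
      (∀ r ∈ Set.Icc (0:ℝ) ρ₀, mu r ≤ Mb) := by
    obtain ⟨C₁, hC₁⟩ := isCompact_Icc.exists_bound_of_continuousOn (hlam.continuousOn.mono hIcc)
    obtain ⟨C₂, hC₂⟩ := isCompact_Icc.exists_bound_of_continuousOn (hmu.continuousOn.mono hIcc)
    refine ⟨|C₁| + |C₂| + 1, by
        have := abs_nonneg C₁; have := abs_nonneg C₂; linarith,
      fun r hr => ?_, fun r hr => ?_⟩
    · have h1 := hC₁ r hr; rw [Real.norm_eq_abs] at h1
      linarith [le_abs_self (lam r), le_abs_self C₁, abs_nonneg C₂]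
    · have h1 := hC₂ r hr; rw [Real.norm_eq_abs] at h1
      linarith [le_abs_self (mu r), le_abs_self C₂, abs_nonneg C₁]
  -- the key numeric inequality
  simp only [cProfile] at hlt
  set J₀ : ℝ := ∫ s in (0:ℝ)..ρ₀, s * lam s ^ 2 * mu s with hJ₀def
  have h2 : ρ₀ * (lam ρ₀ * mu ρ₀) < 2 * H * J₀ := by
    have hne : ρ₀ ≠ 0 := ne_of_gt hρ₀pos
    have h3 := mul_lt_mul_of_pos_left hlt hρ₀pos
    have h4 : ρ₀ * (2 * H * ρ₀ * ((ρ₀ ^ 2)⁻¹ * J₀)) = 2 * H * J₀ := by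
      field_simp
    rw [h4] at h3
    exact h3
  set δ : ℝ := 4 * Real.pi * H * J₀ - 2 * Real.pi * (ρ₀ * (lam ρ₀ * mu ρ₀)) with hδdef
  have hδpos : 0 < δ := by
    rw [hδdef]
    nlinarith [mul_pos hπ (sub_pos.mpr h2)]
  set Cb : ℝ := 2 * Real.pi * Mb ^ 2 + 4 * Real.pi * H * (ρ₀ * Mb ^ 3) with hCbdef
  have hCbpos : 0 < Cb := by
    rw [hCbdef]
    have h5 : 0 ≤ 4 * Real.pi * H * (ρ₀ * Mb ^ 3) := by
      have e : 4 * Real.pi * H * (ρ₀ * Mb ^ 3) = 4 * Real.pi * (ρ₀ * Mb ^ 3) * H := by ring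
      rw [e]
      exact mul_nonneg (by positivity) hH
    nlinarith [mul_pos hπ (show (0:ℝ) < Mb ^ 2 by positivity)]
  set ε : ℝ := min ρ₀ (δ / (2 * Cb)) with hεdef
  have hε0 : 0 < ε := lt_min hρ₀pos (div_pos hδpos (by linarith))
  have hερ₀ : ε ≤ ρ₀ := min_le_left _ _
  have hεC : ε * Cb ≤ δ / 2 := by
    have h5 : ε ≤ δ / (2 * Cb) := min_le_right _ _
    have h6 := mul_le_mul_of_nonneg_right h5 hCbpos.le
    have h7 : δ / (2 * Cb) * Cb = δ / 2 := by
      field_simp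
    linarith
  have hεS : ε ∈ S := hIcc ⟨hε0.le, hερ₀⟩
  -- Integrability facts
  have hintPrθ : ∀ ρ : ℝ, 0 < ρ → ρ ∈ S →
      IntervalIntegrable (fun θ => polPr F₁ F₂ ρ θ) MeasureTheory.volume 0 (2 * Real.pi) :=
    fun ρ hρ hρS => by
      apply ContinuousOn.intervalIntegrable
      intro θ _
      exact (hcomp2 ρ hρ hρS θ).continuousWithinAt
  have hintQtθ : ∀ ρ : ℝ, 0 < ρ → ρ ∈ S →
      IntervalIntegrable (fun θ => polQt F₁ F₂ ρ θ) MeasureTheory.volume 0 (2 * Real.pi) :=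
    fun ρ hρ hρS => by
      apply ContinuousOn.intervalIntegrable
      intro θ _
      exact (hcompQt ρ hρ hρS θ).continuousWithinAt
  have hintPθ : ∀ ρ : ℝ, 0 < ρ → ρ ∈ S →
      IntervalIntegrable (fun θ => polP F₁ F₂ ρ θ) MeasureTheory.volume 0 (2 * Real.pi) :=
    fun ρ hρ hρS => by
      apply ContinuousOn.intervalIntegrable
      intro θ _
      exact (hcompP ρ hρ hρS θ).continuousWithinAt
  -- FTC in the angular direction: the tangential term integrates to zero
  have hFTCθ : ∀ ρ : ℝ, 0 < ρ → ρ ∈ S →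
      (∫ θ in (0:ℝ)..(2 * Real.pi), polQt F₁ F₂ ρ θ) = 0 := by
    intro ρ hρpos hρS
    have heq : (∫ θ in (0:ℝ)..(2 * Real.pi), polQt F₁ F₂ ρ θ)
        = polQ F₁ F₂ ρ (2 * Real.pi) - polQ F₁ F₂ ρ 0 := by
      apply intervalIntegral.integral_eq_sub_of_hasDerivAt
      · intro θ hθ
        obtain ⟨k1, k2⟩ := hdiff ρ θ hρpos hρS
        exact polQ_hasDerivAt F₁ F₂ ρ θ k1 k2
      · exact hintQtθ ρ hρpos hρS
    rw [heq]
    have hper : polQ F₁ F₂ ρ (2 * Real.pi) = polQ F₁ F₂ ρ 0 := by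
      simp [polQ, polC, Real.cos_two_pi, Real.sin_two_pi, Real.cos_zero, Real.sin_zero]
    rw [hper, sub_self]
  -- FTC in the radial direction
  have hFTCρ : ∀ θ : ℝ, (∫ r in ε..ρ₀, polPr F₁ F₂ r θ)
      = polP F₁ F₂ ρ₀ θ - polP F₁ F₂ ε θ := by
    intro θ
    apply intervalIntegral.integral_eq_sub_of_hasDerivAt
    · intro r hr
      rw [Set.uIcc_of_le hερ₀] at hr
      have hrpos : 0 < r := lt_of_lt_of_le hε0 hr.1
      have hrS : r ∈ S := hIcc ⟨hrpos.le, hr.2⟩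
      obtain ⟨k1, k2⟩ := hdiff r θ hrpos hrS
      exact polP_hasDerivAt F₁ F₂ r θ k1 k2
    · apply ContinuousOn.intervalIntegrable
      intro r hr
      rw [Set.uIcc_of_le hερ₀] at hr
      have hrpos : 0 < r := lt_of_lt_of_le hε0 hr.1
      have hrS : r ∈ S := hIcc ⟨hrpos.le, hr.2⟩
      exact (hcomp1 θ r hrpos hrS).continuousWithinAt
  -- joint continuity for Fubini
  have hcontPr : ContinuousOn (fun z : ℝ × ℝ => polPr F₁ F₂ z.1 z.2)
      (Set.Icc ε ρ₀ ×ˢ Set.Icc 0 (2 * Real.pi)) := by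
    intro z hz
    have hz1 : 0 < z.1 := lt_of_lt_of_le hε0 hz.1.1
    have hz1S : z.1 ∈ S := hIcc ⟨hz1.le, hz.1.2⟩
    obtain ⟨k1, k2⟩ := key _ (hmemU z.1 z.2 hz1.le hz1S) (hne0 z.1 z.2 hz1)
    exact (polPr_continuousAt F₁ F₂ z k1 k2).continuousWithinAt
  -- the inner angular integral of the divergence
  have hinner : ∀ ρ ∈ Set.uIcc ε ρ₀,
      (∫ θ in (0:ℝ)..(2 * Real.pi), polPr F₁ F₂ ρ θ)
        = (4 * Real.pi * H) * (ρ * lam ρ ^ 2 * mu ρ) := by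
    intro ρ hρ
    rw [Set.uIcc_of_le hερ₀] at hρ
    have hρpos : 0 < ρ := lt_of_lt_of_le hε0 hρ.1
    have hρS : ρ ∈ S := hIcc ⟨hρpos.le, hρ.2⟩
    have hsum : (∫ θ in (0:ℝ)..(2 * Real.pi), (polPr F₁ F₂ ρ θ + polQt F₁ F₂ ρ θ))
        = (4 * Real.pi * H) * (ρ * lam ρ ^ 2 * mu ρ) := by
      rw [intervalIntegral.integral_congr (g := fun _ => 2 * H * (ρ * lam ρ ^ 2 * mu ρ))
        (fun θ _ => hdiv ρ θ hρpos hρS)]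
      rw [intervalIntegral.integral_const, smul_eq_mul, sub_zero]
      ring
    have hadd := intervalIntegral.integral_add (hintPrθ ρ hρpos hρS) (hintQtθ ρ hρpos hρS)
    rw [hadd, hFTCθ ρ hρpos hρS] at hsum
    linarith
  -- main identity: divergence theorem on the annulus
  have hmain : (4 * Real.pi * H) * (∫ r in ε..ρ₀, r * lam r ^ 2 * mu r)
      = ∫ θ in (0:ℝ)..(2 * Real.pi), (polP F₁ F₂ ρ₀ θ - polP F₁ F₂ ε θ) := by
    calc (4 * Real.pi * H) * (∫ r in ε..ρ₀, r * lam r ^ 2 * mu r)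
        = ∫ r in ε..ρ₀, (4 * Real.pi * H) * (r * lam r ^ 2 * mu r) :=
          (intervalIntegral.integral_const_mul _ _).symm
      _ = ∫ r in ε..ρ₀, ∫ θ in (0:ℝ)..(2 * Real.pi), polPr F₁ F₂ r θ :=
          (intervalIntegral.integral_congr (fun r hr => hinner r hr)).symm
      _ = ∫ θ in (0:ℝ)..(2 * Real.pi), ∫ r in ε..ρ₀, polPr F₁ F₂ r θ :=
          swap_integrals _ _ _ _ _ hερ₀ h2π hcontPr
      _ = ∫ θ in (0:ℝ)..(2 * Real.pi), (polP F₁ F₂ ρ₀ θ - polP F₁ F₂ ε θ) :=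
          intervalIntegral.integral_congr (fun θ _ => hFTCρ θ)
  -- bound the flux through the two circles
  have hRHS : (∫ θ in (0:ℝ)..(2 * Real.pi), (polP F₁ F₂ ρ₀ θ - polP F₁ F₂ ε θ))
      ≤ 2 * Real.pi * (ρ₀ * (lam ρ₀ * mu ρ₀)) + 2 * Real.pi * (ε * (lam ε * mu ε)) := by
    have hint₁ := hintPθ ρ₀ hρ₀pos hρ₀S
    have hint₂ := hintPθ ε hε0 hεS
    rw [intervalIntegral.integral_sub hint₁ hint₂]
    have hA : (∫ θ in (0:ℝ)..(2 * Real.pi), polP F₁ F₂ ρ₀ θ)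
        ≤ 2 * Real.pi * (ρ₀ * (lam ρ₀ * mu ρ₀)) := by
      have h5 := intervalIntegral.integral_mono_on h2π hint₁ intervalIntegrable_const
        (fun θ _ => (hPbound ρ₀ θ hρ₀pos.le hρ₀S).1)
      rw [intervalIntegral.integral_const, smul_eq_mul, sub_zero] at h5
      linarith
    have hB : -(2 * Real.pi * (ε * (lam ε * mu ε)))
        ≤ (∫ θ in (0:ℝ)..(2 * Real.pi), polP F₁ F₂ ε θ) := by
      have h5 := intervalIntegral.integral_mono_on h2π intervalIntegrable_const hint₂
        (fun θ _ => (hPbound ε θ hε0.le hεS).2)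
      rw [intervalIntegral.integral_const, smul_eq_mul, sub_zero] at h5
      linarith
    linarith
  -- error estimates on the small disc
  have hεIcc : ε ∈ Set.Icc (0:ℝ) ρ₀ := ⟨hε0.le, hερ₀⟩
  have hεbound : ε * (lam ε * mu ε) ≤ ε * Mb ^ 2 := by
    have h5 := hMbl ε hεIcc
    have h6 := hMbm ε hεIcc
    have h7 : 0 < lam ε := hlampos _ hεS
    have h8 : 0 < mu ε := hmupos _ hεS
    have h9 : lam ε * mu ε ≤ Mb ^ 2 := by
      have h10 : lam ε * mu ε ≤ Mb * Mb :=
        mul_le_mul h5 h6 h8.le (by linarith only [h7, h5])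
      have h11 : Mb * Mb = Mb ^ 2 := (sq Mb).symm
      linarith only [h10, h11]
    exact mul_le_mul_of_nonneg_left h9 hε0.le
  have hcont_im : ContinuousOn (fun s : ℝ => s * lam s ^ 2 * mu s) (Set.Icc (0:ℝ) ρ₀) :=
    (continuousOn_id.mul ((hlam.continuousOn.mono hIcc).pow 2)).mul (hmu.continuousOn.mono hIcc)
  have hint_a : IntervalIntegrable (fun s : ℝ => s * lam s ^ 2 * mu s)
      MeasureTheory.volume 0 ε := by
    apply ContinuousOn.intervalIntegrable
    rw [Set.uIcc_of_le hε0.le]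
    exact hcont_im.mono (Set.Icc_subset_Icc le_rfl hερ₀)
  have hint_b : IntervalIntegrable (fun s : ℝ => s * lam s ^ 2 * mu s)
      MeasureTheory.volume ε ρ₀ := by
    apply ContinuousOn.intervalIntegrable
    rw [Set.uIcc_of_le hερ₀]
    exact hcont_im.mono (Set.Icc_subset_Icc hε0.le le_rfl)
  have hsplit : (∫ s in (0:ℝ)..ε, s * lam s ^ 2 * mu s)
      + (∫ s in ε..ρ₀, s * lam s ^ 2 * mu s) = J₀ :=
    intervalIntegral.integral_add_adjacent_intervals hint_a hint_b
  have hJε : (∫ s in (0:ℝ)..ε, s * lam s ^ 2 * mu s) ≤ ε * (ρ₀ * Mb ^ 3) := by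
    have h5 := intervalIntegral.integral_mono_on hε0.le hint_a intervalIntegrable_const
      (fun s hs => by
        have hs' : s ∈ Set.Icc (0:ℝ) ρ₀ := ⟨hs.1, le_trans hs.2 hερ₀⟩
        have l0 : 0 < lam s := hlampos _ (hIcc hs')
        have l0' : 0 < mu s := hmupos _ (hIcc hs')
        have l1 := hMbl s hs'
        have l2 := hMbm s hs'
        have l3 : lam s ^ 2 ≤ Mb ^ 2 := by
          have := pow_le_pow_left₀ l0.le l1 2
          linarith only [this]
        have l4 : lam s ^ 2 * mu s ≤ Mb ^ 2 * Mb :=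
          mul_le_mul l3 l2 l0'.le (by positivity)
        have l5 : s ≤ ρ₀ := hs'.2
        have l6 : (0:ℝ) ≤ s := hs.1
        calc s * lam s ^ 2 * mu s = s * (lam s ^ 2 * mu s) := by ring
          _ ≤ ρ₀ * (Mb ^ 2 * Mb) := by
              apply mul_le_mul l5 l4 (by positivity) hρ₀pos.le
          _ = ρ₀ * Mb ^ 3 := by ring)
    rw [intervalIntegral.integral_const, smul_eq_mul, sub_zero] at h5
    linarith
  -- put everything together
  have h4πH : (0:ℝ) ≤ 4 * Real.pi * H := by
    have e : 4 * Real.pi * H = (4 * Real.pi) * H := by ring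
    rw [e]; exact mul_nonneg (by positivity) hH
  have hJ : (∫ r in ε..ρ₀, r * lam r ^ 2 * mu r)
      = J₀ - (∫ s in (0:ℝ)..ε, s * lam s ^ 2 * mu s) := by linarith only [hsplit]
  rw [hJ] at hmain
  have hkey := hmain.le.trans hRHS
  have hJεnn := mul_le_mul_of_nonneg_left hJε h4πH
  have hεb2 : 2 * Real.pi * (ε * (lam ε * mu ε)) ≤ 2 * Real.pi * (ε * Mb ^ 2) :=
    mul_le_mul_of_nonneg_left hεbound (by positivity)
  have e1 : 4 * Real.pi * H * (J₀ - (∫ s in (0:ℝ)..ε, s * lam s ^ 2 * mu s))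
      = 4 * Real.pi * H * J₀
        - 4 * Real.pi * H * (∫ s in (0:ℝ)..ε, s * lam s ^ 2 * mu s) := by ring
  have hδle : δ ≤ ε * Cb := by
    rw [hδdef, hCbdef]
    linarith only [hkey, hJεnn, hεb2, e1]
  have hcontra : δ ≤ δ / 2 := hδle.trans hεC
  clear_value δ Cb ε J₀
  linarith only [hcontra, hδpos]
end
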